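/- arXiv:1606.08220 — 2 statements merged into one kernel-verified Lean document; each statement's English description precedes it below -/
import Mathlib

section
/- (Theorem 1.) Let Q = diag(q_1,…,q_n) with q_i > 0 and suppose there exist indices i, j with q_i ≠ q_j. Let B ∈ ℝ^{n×m} with ker(Bᵀ) = span{𝟙} (incidence matrix of a connected physical graph), let B_c ∈ ℝ^{n×m_c} with ker(B_cᵀ) = span{𝟙} and set L_c := B_c B_cᵀ (Laplacian of a connected communication graph). Let γ_c, γ_e, γ_p, γ_l > 0, d, r, x̄_0, x̄_s ∈ ℝ^n, x̄(t) := x̄_0 + x̄_s t, and let x, x_p : [0,∞) → ℝ^n, x_e : [0,∞) → ℝ^m be differentiable functions satisfying for all t ≥ 0 the closed-loop equations ẋ = −γ_c B Bᵀ(x − x̄(t)) − γ_e B x_e + Q^{-1}(γ_p x_p − r) + d, ẋ_p = −γ_l L_c x_p − γ_p Q^{-1}(x − x̄(t)), ẋ_e = γ_e Bᵀ(x − x̄(t)). Then lim_{t→∞} ‖x(t) − x̄(t)‖ = 0 and lim_{t→∞} ‖u_p(t) − ū_p‖ = 0, where u_p(t) := Q^{-1}(γ_p x_p(t) − r) and ū_p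 := −Q^{-1}( (𝟙𝟙ᵀ/(𝟙ᵀQ^{-1}𝟙))(d − x̄_s − Q^{-1}r) + r ). -/
open Matrix Filter

/-- Euclidean norm on `Fin k → ℝ`. -/
noncomputable def euclNorm {k : ℕ} (v : Fin k → ℝ) : ℝ :=
  ‖(WithLp.equiv 2 (Fin k → ℝ)).symm v‖

/-- Operator norm on matrices induced by the Euclidean norms. -/
noncomputable def matOpNorm {k l : ℕ} (A : Matrix (Fin k) (Fin l) ℝ) : ℝ :=
  ‖LinearMap.toContinuousLinearMap (Matrix.toEuclideanLin A)‖

/-- The all-ones vector `𝟙`. -/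
def onesVec (k : ℕ) : Fin k → ℝ := fun _ => 1

/-- The all-ones matrix `𝟙𝟙ᵀ`. -/
def onesMat (k : ℕ) : Matrix (Fin k) (Fin k) ℝ := Matrix.of fun _ _ => 1

/-- Scalar saturation: `sat(y; l, u) = l` if `y ≤ l`, `u` if `u ≤ y`, and `y` otherwise. -/
noncomputable def sat1 (y l u : ℝ) : ℝ := if y ≤ l then l else if u ≤ y then u else y

/-- Componentwise (multidimensional) saturation function. -/
noncomputable def satv {k : ℕ} (x xm xp : Fin k → ℝ) : Fin k → ℝ :=
  fun i => sat1 (x i) (xm i) (xp i)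





lemma onesMat_mulVec {n : ℕ} (u : Fin n → ℝ) :
    onesMat n *ᵥ u = (onesVec n ⬝ᵥ u) • onesVec n := by
  funext i
  simp [onesMat, onesVec, Matrix.mulVec, dotProduct]

lemma onesVec_dot_onesVec {n : ℕ} : onesVec n ⬝ᵥ onesVec n = (n : ℝ) := by
  simp [onesVec, dotProduct]





section helpers
variable {k l p : ℕ}

lemma hasDerivAt_mulVec (A : Matrix (Fin k) (Fin l) ℝ) {f : ℝ → Fin l → ℝ} {f' : Fin l → ℝ} {t : ℝ}
    (hf : HasDerivAt f f' t) : HasDerivAt (fun s => A *ᵥ f s) (A *ᵥ f') t := by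
  rw [hasDerivAt_pi] at hf ⊢
  intro i
  simpa [Matrix.mulVec, dotProduct] using
    HasDerivAt.fun_sum (fun j (_ : j ∈ Finset.univ) => ((hf j).const_mul (A i j)))

lemma hasDerivAt_dot {f g : ℝ → Fin k → ℝ} {f' g' : Fin k → ℝ} {t : ℝ}
    (hf : HasDerivAt f f' t) (hg : HasDerivAt g g' t) :
    HasDerivAt (fun s => f s ⬝ᵥ g s) (f' ⬝ᵥ g t + f t ⬝ᵥ g') t := by
  have := HasDerivAt.fun_sum (fun i (_ : i ∈ Finset.univ) =>
    ((hasDerivAt_pi.1 hf i).mul (hasDerivAt_pi.1 hg i)))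
  simpa [dotProduct, Finset.sum_add_distrib] using this

lemma tendsto_dotProduct {f g : ℝ → Fin k → ℝ} {a b : Fin k → ℝ}
    (hf : Tendsto f atTop (nhds a)) (hg : Tendsto g atTop (nhds b)) :
    Tendsto (fun t => f t ⬝ᵥ g t) atTop (nhds (a ⬝ᵥ b)) := by
  rw [tendsto_pi_nhds] at hf hg
  simpa [dotProduct] using
    tendsto_finset_sum Finset.univ (fun i (_ : i ∈ Finset.univ) => (hf i).mul (hg i))

lemma dot_abs_le (u v : Fin k → ℝ) : |u ⬝ᵥ v| ≤ (k : ℝ) * ‖u‖ * ‖v‖ := by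
  calc |u ⬝ᵥ v| ≤ ∑ i, |u i * v i| := Finset.abs_sum_le_sum_abs _ _
    _ ≤ ∑ _i : Fin k, ‖u‖ * ‖v‖ := by
        refine Finset.sum_le_sum fun i _ => ?_
        rw [abs_mul]
        have hu : |u i| ≤ ‖u‖ := by simpa using norm_le_pi_norm u i
        have hv : |v i| ≤ ‖v‖ := by simpa using norm_le_pi_norm v i
        exact mul_le_mul hu hv (abs_nonneg _) (norm_nonneg _)
    _ = (k : ℝ) * ‖u‖ * ‖v‖ := by simp [mul_assoc]

lemma mulVec_norm_le (A : Matrix (Fin k) (Fin l) ℝ) :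
    ∃ C : ℝ, 0 ≤ C ∧ ∀ v, ‖A *ᵥ v‖ ≤ C * ‖v‖ := by
  refine ⟨‖LinearMap.toContinuousLinearMap A.mulVecLin‖, norm_nonneg _, fun v => ?_⟩
  simpa using (LinearMap.toContinuousLinearMap A.mulVecLin).le_opNorm v

lemma norm_sub_le_of_hasDerivAt {E : Type*} [NormedAddCommGroup E] [NormedSpace ℝ E]
    {f f' : ℝ → E} {M : ℝ}
    (hf : ∀ t ≥ (0:ℝ), HasDerivAt f (f' t) t) (hM : ∀ t ≥ (0:ℝ), ‖f' t‖ ≤ M)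
    {a b : ℝ} (ha : 0 ≤ a) (hab : a ≤ b) : ‖f b - f a‖ ≤ M * (b - a) := by
  have h1 : ∀ x ∈ Set.Icc a b, HasDerivWithinAt f (f' x) (Set.Icc a b) x :=
    fun x hx => (hf x (le_trans ha hx.1)).hasDerivWithinAt
  exact norm_image_sub_le_of_norm_deriv_le_segment' h1
    (fun x hx => hM x (le_trans ha hx.1)) b ⟨hab, le_rfl⟩

end helpers





/-- If `ker L ≤ ker P` then `P` factors through `L`, giving a norm bound. -/
lemma exists_norm_le_comp {k l p : ℕ} (L : (Fin k → ℝ) →ₗ[ℝ] (Fin l → ℝ))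
    (P : (Fin k → ℝ) →ₗ[ℝ] (Fin p → ℝ))
    (hker : LinearMap.ker L ≤ LinearMap.ker P) :
    ∃ C : ℝ, ∀ v, ‖P v‖ ≤ C * ‖L v‖ := by
  obtain ⟨Wc, hWc⟩ := Submodule.exists_isCompl (LinearMap.range L)
  let proj : (Fin l → ℝ) →ₗ[ℝ] LinearMap.range L :=
    (LinearMap.range L).linearProjOfIsCompl Wc hWc
  let g : (Fin l → ℝ) →ₗ[ℝ] (Fin p → ℝ) :=
    ((LinearMap.ker L).liftQ P hker) ∘ₗ (L.quotKerEquivRange.symm : (LinearMap.range L) →ₗ[ℝ] _) ∘ₗ proj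
  have hg : ∀ v, g (L v) = P v := by
    intro v
    have h1 : proj (L v) = ⟨L v, LinearMap.mem_range_self L v⟩ :=
      Submodule.linearProjOfIsCompl_apply_left hWc ⟨L v, LinearMap.mem_range_self L v⟩
    have h2 : L.quotKerEquivRange.symm ⟨L v, LinearMap.mem_range_self L v⟩
        = Submodule.Quotient.mk v := by
      rw [LinearEquiv.symm_apply_eq]
      rfl
    simp only [g, LinearMap.comp_apply, LinearEquiv.coe_coe, h1, h2]
    rfl
  refine ⟨‖LinearMap.toContinuousLinearMap g‖, fun v => ?_⟩
  calc ‖P v‖ = ‖LinearMap.toContinuousLinearMap g (L v)‖ := by simp [hg]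
    _ ≤ ‖LinearMap.toContinuousLinearMap g‖ * ‖L v‖ :=
        (LinearMap.toContinuousLinearMap g).le_opNorm _

/-- Fredholm-type solvability: if `ker Bᵀ = span{𝟙}` then every vector with zero sum
is in the range of `B`. -/
lemma exists_mulVec_eq {n m : ℕ} (hn : 0 < n) (B : Matrix (Fin n) (Fin m) ℝ)
    (hB : LinearMap.ker Bᵀ.mulVecLin = Submodule.span ℝ {onesVec n})
    (v : Fin n → ℝ) (hv : onesVec n ⬝ᵥ v = 0) : ∃ w, B *ᵥ w = v := by
  have hones_ne : onesVec n ≠ 0 := by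
    intro h
    exact one_ne_zero (congrFun h ⟨0, hn⟩)
  have hB1 : Bᵀ *ᵥ onesVec n = 0 := by
    have h1 : onesVec n ∈ LinearMap.ker Bᵀ.mulVecLin := by
      rw [hB]; exact Submodule.mem_span_singleton_self _
    have h2 := LinearMap.mem_ker.1 h1
    rwa [Matrix.mulVecLin_apply] at h2
  set φ : (Fin n → ℝ) →ₗ[ℝ] (Fin 1 → ℝ) :=
    (Matrix.of fun (_ : Fin 1) (_ : Fin n) => (1:ℝ)).mulVecLin with hφdef
  have hφval : ∀ u : Fin n → ℝ, φ u = fun _ => onesVec n ⬝ᵥ u := by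
    intro u; funext j
    simp [hφdef, Matrix.mulVecLin_apply, Matrix.mulVec, dotProduct, onesVec]
  -- range B ≤ ker φ
  have hle : LinearMap.range B.mulVecLin ≤ LinearMap.ker φ := by
    rintro u ⟨w, rfl⟩
    rw [LinearMap.mem_ker, hφval]
    funext j
    rw [Matrix.mulVecLin_apply, Matrix.dotProduct_mulVec, ← Matrix.mulVec_transpose, hB1]
    simp [dotProduct]
  -- φ surjective
  have hφsurj : Function.Surjective φ := by
    intro c
    refine ⟨fun _ => c 0 / n, ?_⟩
    rw [hφval]
    funext j
    have hj : j = 0 := Subsingleton.elim j 0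
    have hn' : (n:ℝ) ≠ 0 := Nat.cast_ne_zero.2 hn.ne'
    subst hj
    simp [onesVec, dotProduct, Finset.sum_const]
    field_simp
  -- finrank computations
  have hd1 : Module.finrank ℝ (LinearMap.range φ) + Module.finrank ℝ (LinearMap.ker φ) = n := by
    rw [LinearMap.finrank_range_add_finrank_ker]
    simp [Module.finrank_fintype_fun_eq_card]
  have hd2 : Module.finrank ℝ (LinearMap.range φ) = 1 := by
    rw [LinearMap.range_eq_top.2 hφsurj, finrank_top]
    simp [Module.finrank_fintype_fun_eq_card]
  have hd3 : Module.finrank ℝ (LinearMap.range Bᵀ.mulVecLin)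
      + Module.finrank ℝ (LinearMap.ker Bᵀ.mulVecLin) = n := by
    rw [LinearMap.finrank_range_add_finrank_ker]
    simp [Module.finrank_fintype_fun_eq_card]
  have hd4 : Module.finrank ℝ (LinearMap.ker Bᵀ.mulVecLin) = 1 := by
    rw [hB]; exact finrank_span_singleton hones_ne
  have hd5 : Module.finrank ℝ (LinearMap.range B.mulVecLin)
      = Module.finrank ℝ (LinearMap.range Bᵀ.mulVecLin) := by
    have := Matrix.rank_transpose B
    simpa [Matrix.rank] using this.symm
  have heq : LinearMap.range B.mulVecLin = LinearMap.ker φ := by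
    apply Submodule.eq_of_le_of_finrank_le hle
    omega
  have hvmem : v ∈ LinearMap.ker φ := by
    rw [LinearMap.mem_ker, hφval]
    funext j
    simp [hv]
  rw [← heq] at hvmem
  obtain ⟨w, hw⟩ := hvmem
  exact ⟨w, by simpa [Matrix.mulVecLin_apply] using hw⟩


lemma continuous_mulVec' {a b : ℕ} (A : Matrix (Fin a) (Fin b) ℝ) :
    Continuous (fun v : Fin b → ℝ => A *ᵥ v) := by
  refine continuous_pi fun i => ?_
  simp only [Matrix.mulVec, dotProduct]
  exact continuous_finset_sum _ fun j _ => (continuous_const.mul (continuous_apply j))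

lemma continuous_dot_self {a : ℕ} :
    Continuous (fun v : Fin a → ℝ => v ⬝ᵥ v) := by
  simp only [dotProduct]
  exact continuous_finset_sum _ fun j _ => ((continuous_apply j).mul (continuous_apply j))

lemma dot_sub_dot {a : ℕ} (u v : Fin a → ℝ) :
    u ⬝ᵥ u - v ⬝ᵥ v = (u - v) ⬝ᵥ (u + v) := by
  rw [sub_dotProduct, dotProduct_add, dotProduct_add,
    dotProduct_comm v u]
  ring




lemma lipschitz_continuousOn {f : ℝ → ℝ} {M : ℝ}
    (hlip : ∀ a b : ℝ, 0 ≤ a → a ≤ b → |f b - f a| ≤ M * (b - a)) :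
    ContinuousOn f (Set.Ici 0) := by
  have : LipschitzOnWith (Real.toNNReal M) f (Set.Ici 0) := by
    rw [lipschitzOnWith_iff_dist_le_mul]
    intro a ha b hb
    have hM' : (M:ℝ) ≤ Real.toNNReal M := Real.le_coe_toNNReal M
    rw [Real.dist_eq, Real.dist_eq]
    rcases le_total a b with h | h
    · have h1 := hlip a b ha h
      have h2 : |a - b| = b - a := by rw [abs_sub_comm]; exact abs_of_nonneg (by linarith)
      rw [abs_sub_comm, h2]
      nlinarith [abs_nonneg (f b - f a)]
    · have h1 := hlip b a hb h
      have h2 : |a - b| = a - b := abs_of_nonneg (by linarith)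
      rw [h2]
      nlinarith [abs_nonneg (f a - f b)]
  exact this.continuousOn

/-- L²-Barbalat: a nonnegative Lipschitz function with bounded integrals tends to 0. -/
lemma tendsto_zero_of_l2 {h : ℝ → ℝ} {M C : ℝ} (hM : 0 < M)
    (hnn : ∀ t ≥ (0:ℝ), 0 ≤ h t)
    (hlip : ∀ a b : ℝ, 0 ≤ a → a ≤ b → |h b - h a| ≤ M * (b - a))
    (hint : ∀ T ≥ (0:ℝ), ∫ t in (0:ℝ)..T, h t ≤ C) :
    Tendsto h atTop (nhds 0) := by
  have hcont : ContinuousOn h (Set.Ici 0) := lipschitz_continuousOn hlip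
  have hii : ∀ a b : ℝ, 0 ≤ a → a ≤ b → IntervalIntegrable h MeasureTheory.volume a b := by
    intro a b ha hab
    exact (hcont.mono (by rw [Set.uIcc_of_le hab]; intro s hs; exact le_trans ha hs.1)).intervalIntegrable
  by_contra hcon
  rw [Metric.tendsto_atTop] at hcon
  push_neg at hcon
  obtain ⟨ε, hε, hfr⟩ := hcon
  set δ := ε / (2 * M) with hδdef
  have hδpos : 0 < δ := by positivity
  have hMδ : M * δ = ε / 2 := by rw [hδdef]; field_simp
  have step : ∀ N : ℝ, ∃ t, max N 0 ≤ t ∧ ε ≤ h t := by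
    intro N
    obtain ⟨t, ht, hd⟩ := hfr (max N 0)
    have h0t : (0:ℝ) ≤ t := le_trans (le_max_right _ _) ht
    refine ⟨t, ht, ?_⟩
    rw [Real.dist_eq, sub_zero, abs_of_nonneg (hnn t h0t)] at hd
    exact hd
  choose T hT₁ hT₂ using step
  let u : ℕ → ℝ := fun k => Nat.rec (T 0) (fun _ prev => T (prev + δ)) k
  have hu0 : 0 ≤ u 0 := le_trans (le_max_right _ _) (hT₁ 0)
  have husucc : ∀ k, u k + δ ≤ u (k + 1) := fun k =>
    le_trans (le_max_left _ _) (hT₁ (u k + δ))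
  have hunn : ∀ k, 0 ≤ u k := by
    intro k; induction k with
    | zero => exact hu0
    | succ k ih => exact le_trans (by linarith [hδpos]) (husucc k)
  have huval : ∀ k, ε ≤ h (u k) := by
    intro k; cases k with
    | zero => exact hT₂ 0
    | succ k => exact hT₂ (u k + δ)
  -- lower bound on each short integral
  have key : ∀ k, ε / 2 * δ ≤ ∫ t in (u k)..(u k + δ), h t := by
    intro k
    have hlow : ∀ s ∈ Set.Icc (u k) (u k + δ), ε / 2 ≤ h s := by
      intro s hs
      have h1 : |h s - h (u k)| ≤ M * (s - u k) := hlip (u k) s (hunn k) hs.1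
      have h2 : M * (s - u k) ≤ M * δ := by
        apply mul_le_mul_of_nonneg_left _ hM.le
        linarith [hs.2]
      have := huval k
      have := abs_le.1 h1
      rw [hMδ] at h2
      linarith [this.1]
    calc ε / 2 * δ = ∫ _t in (u k)..(u k + δ), (ε/2 : ℝ) := by
          rw [intervalIntegral.integral_const]; simp [smul_eq_mul]; ring
      _ ≤ ∫ t in (u k)..(u k + δ), h t := by
          apply intervalIntegral.integral_mono_on (by linarith)
            intervalIntegrable_const (hii _ _ (hunn k) (by linarith)) hlow
  -- accumulate
  have accum : ∀ k : ℕ, (k + 1 : ℝ) * (ε / 2 * δ) ≤ ∫ t in (0:ℝ)..(u k + δ), h t := by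
    intro k
    induction k with
    | zero =>
      have hsplit : ∫ t in (0:ℝ)..(u 0 + δ), h t
          = (∫ t in (0:ℝ)..(u 0), h t) + ∫ t in (u 0)..(u 0 + δ), h t :=
        (intervalIntegral.integral_add_adjacent_intervals
          (hii _ _ le_rfl hu0) (hii _ _ hu0 (by linarith))).symm
      have hnn1 : 0 ≤ ∫ t in (0:ℝ)..(u 0), h t :=
        intervalIntegral.integral_nonneg hu0 (fun s hs => hnn s hs.1)
      have := key 0
      rw [hsplit]; push_cast; linarith
    | succ k ih =>
      have h1 : u k + δ ≤ u (k+1) := husucc k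
      have hsplit1 : ∫ t in (0:ℝ)..(u (k+1) + δ), h t
          = (∫ t in (0:ℝ)..(u k + δ), h t) + ∫ t in (u k + δ)..(u (k+1) + δ), h t :=
        (intervalIntegral.integral_add_adjacent_intervals
          (hii _ _ le_rfl (by linarith [hunn k]))
          (hii _ _ (by linarith [hunn k]) (by linarith))).symm
      have hsplit2 : ∫ t in (u k + δ)..(u (k+1) + δ), h t
          = (∫ t in (u k + δ)..(u (k+1)), h t) + ∫ t in (u (k+1))..(u (k+1) + δ), h t :=
        (intervalIntegral.integral_add_adjacent_intervals
          (hii _ _ (by linarith [hunn k]) h1)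
          (hii _ _ (hunn (k+1)) (by linarith))).symm
      have hnn2 : 0 ≤ ∫ t in (u k + δ)..(u (k+1)), h t :=
        intervalIntegral.integral_nonneg h1 (fun s hs => hnn s (le_trans (by linarith [hunn k]) hs.1))
      have := key (k+1)
      rw [hsplit1, hsplit2]; push_cast; push_cast at ih; linarith
  obtain ⟨k, hk⟩ := exists_nat_gt (C / (ε / 2 * δ))
  have hpos : 0 < ε / 2 * δ := by positivity
  have h1 : C < (k + 1 : ℝ) * (ε / 2 * δ) := by
    rw [div_lt_iff₀ hpos] at hk
    nlinarith
  have h2 := accum k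
  have h3 := hint (u k + δ) (by linarith [hunn k])
  linarith

/-- Barbalat: if `f → L` and `f'` is Lipschitz on `[0,∞)`, then `f' → 0`. -/
lemma tendsto_deriv_zero_of_tendsto {f f' : ℝ → ℝ} {M L : ℝ} (hM : 0 < M)
    (hf : ∀ t ≥ (0:ℝ), HasDerivAt f (f' t) t)
    (hlip : ∀ a b : ℝ, 0 ≤ a → a ≤ b → |f' b - f' a| ≤ M * (b - a))
    (hconv : Tendsto f atTop (nhds L)) :
    Tendsto f' atTop (nhds 0) := by
  have hcont : ContinuousOn f' (Set.Ici 0) := lipschitz_continuousOn hlip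
  rw [Metric.tendsto_atTop] at hconv ⊢
  intro ε hε
  set δ := ε / (2 * M) with hδdef
  have hδpos : 0 < δ := by positivity
  have hMδ : M * δ = ε / 2 := by rw [hδdef]; field_simp
  obtain ⟨N, hN⟩ := hconv (ε * δ / 8) (by positivity)
  refine ⟨max N 0, fun t ht => ?_⟩
  have htN : N ≤ t := le_trans (le_max_left _ _) ht
  have ht0 : (0:ℝ) ≤ t := le_trans (le_max_right _ _) ht
  rw [Real.dist_eq, sub_zero]
  by_contra hcon
  push_neg at hcon
  have hsub : Set.uIcc t (t + δ) ⊆ Set.Ici 0 := by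
    rw [Set.uIcc_of_le (by linarith)]
    intro s hs
    exact le_trans ht0 hs.1
  have hii2 : IntervalIntegrable f' MeasureTheory.volume t (t + δ) :=
    (hcont.mono hsub).intervalIntegrable
  have hftc : ∫ s in t..(t + δ), f' s = f (t + δ) - f t := by
    apply intervalIntegral.integral_eq_sub_of_hasDerivAt
    · intro s hs
      rw [Set.uIcc_of_le (by linarith)] at hs
      exact hf s (le_trans ht0 hs.1)
    · exact hii2
  have hdiff : |f (t + δ) - f t| < ε * δ / 4 := by
    have h1 := hN t htN
    have h2 := hN (t + δ) (by linarith)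
    rw [Real.dist_eq] at h1 h2
    calc |f (t + δ) - f t| ≤ |f (t + δ) - L| + |L - f t| := abs_sub_le _ _ _
      _ = |f (t + δ) - L| + |f t - L| := by rw [abs_sub_comm L]
      _ < ε * δ / 8 + ε * δ / 8 := add_lt_add h2 h1
      _ = ε * δ / 4 := by ring
  rcases le_abs.1 hcon with hpos | hneg
  · -- ε ≤ f' t
    have hlow : ∀ s ∈ Set.Icc t (t + δ), ε / 2 ≤ f' s := by
      intro s hs
      have h1 := abs_le.1 (hlip t s ht0 hs.1)
      have h2 : M * (s - t) ≤ M * δ := mul_le_mul_of_nonneg_left (by linarith [hs.2]) hM.le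
      rw [hMδ] at h2
      linarith [h1.1]
    have hge : ε / 2 * δ ≤ ∫ s in t..(t + δ), f' s := by
      calc ε / 2 * δ = ∫ _s in t..(t + δ), (ε/2 : ℝ) := by
            rw [intervalIntegral.integral_const]; simp [smul_eq_mul]; ring
        _ ≤ _ := intervalIntegral.integral_mono_on (by linarith)
            intervalIntegrable_const hii2 hlow
    rw [hftc] at hge
    have : f (t + δ) - f t ≤ |f (t + δ) - f t| := le_abs_self _
    nlinarith
  · -- f' t ≤ -ε
    have hlow : ∀ s ∈ Set.Icc t (t + δ), f' s ≤ -(ε / 2) := by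
      intro s hs
      have h1 := abs_le.1 (hlip t s ht0 hs.1)
      have h2 : M * (s - t) ≤ M * δ := mul_le_mul_of_nonneg_left (by linarith [hs.2]) hM.le
      rw [hMδ] at h2
      linarith [h1.2]
    have hge : (∫ s in t..(t + δ), f' s) ≤ -(ε / 2) * δ := by
      calc (∫ s in t..(t + δ), f' s) ≤ ∫ _s in t..(t + δ), (-(ε/2) : ℝ) :=
            intervalIntegral.integral_mono_on (by linarith) hii2
              intervalIntegrable_const hlow
        _ = -(ε / 2) * δ := by rw [intervalIntegral.integral_const]; simp [smul_eq_mul]; ring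
    rw [hftc] at hge
    have : -(f (t + δ) - f t) ≤ |f (t + δ) - f t| := neg_le_abs _
    nlinarith


lemma euclNorm_eq {n : ℕ} (v : Fin n → ℝ) : euclNorm v = Real.sqrt (v ⬝ᵥ v) := by
  rw [euclNorm, EuclideanSpace.norm_eq]
  congr 1
  simp [dotProduct, sq]

lemma tendsto_euclNorm_zero {n : ℕ} {f : ℝ → Fin n → ℝ} (hf : Filter.Tendsto f Filter.atTop (nhds 0)) :
    Filter.Tendsto (fun t => euclNorm (f t)) Filter.atTop (nhds 0) := by
  have h1 : Filter.Tendsto (fun t => f t ⬝ᵥ f t) Filter.atTop (nhds ((0 : Fin n → ℝ) ⬝ᵥ 0)) := by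
    rw [tendsto_pi_nhds] at hf
    exact tendsto_finset_sum Finset.univ fun i _ => ((hf i).mul (hf i))
  simp only [zero_dotProduct] at h1
  have h2 := (Real.continuous_sqrt.tendsto 0).comp h1
  simp only [Function.comp, Real.sqrt_zero] at h2
  have h3 : (fun t => euclNorm (f t)) = fun t => Real.sqrt (f t ⬝ᵥ f t) := by
    funext t
    exact euclNorm_eq _
  rw [h3]
  exact h2

lemma dot_mulVec' {a b : ℕ} (A : Matrix (Fin a) (Fin b) ℝ) (u : Fin a → ℝ) (v : Fin b → ℝ) :
    u ⬝ᵥ (A *ᵥ v) = (Aᵀ *ᵥ u) ⬝ᵥ v := by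
  rw [Matrix.dotProduct_mulVec, ← Matrix.mulVec_transpose]

lemma norm_le_sqrt_dot {k : ℕ} {v : Fin k → ℝ} {b : ℝ} (hb : v ⬝ᵥ v ≤ b) :
    ‖v‖ ≤ Real.sqrt b := by
  rw [pi_norm_le_iff_of_nonneg (Real.sqrt_nonneg _)]
  intro i
  have h1 : v i * v i ≤ v ⬝ᵥ v :=
    Finset.single_le_sum (f := fun j => v j * v j) (fun j _ => mul_self_nonneg _)
      (Finset.mem_univ i)
  have h2 : ‖v i‖ = Real.sqrt (v i * v i) := by
    rw [Real.sqrt_mul_self_eq_abs, Real.norm_eq_abs]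
  rw [h2]
  exact Real.sqrt_le_sqrt (le_trans h1 hb)

lemma abs_component_le_sqrt_dot {a : ℕ} (v : Fin a → ℝ) (i : Fin a) :
    ‖v i‖ ≤ Real.sqrt (v ⬝ᵥ v) :=
  le_trans (norm_le_pi_norm v i) (norm_le_sqrt_dot le_rfl)

lemma dotProduct_self_nonneg' {k : ℕ} (v : Fin k → ℝ) : 0 ≤ v ⬝ᵥ v :=
  Finset.sum_nonneg fun i _ => mul_self_nonneg (v i)

set_option maxHeartbeats 2000000 in
/-- Theorem 1: the unconstrained distributed controllers achieve
`x(t) − x̄(t) → 0` and `u_p(t) → ū_p` (the optimal steady-state input). -/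
theorem theorem1_unconstrained_regulation {n m mc : ℕ}
    (q : Fin n → ℝ) (hq : ∀ i, 0 < q i)
    (hq2 : ∃ i j, q i ≠ q j)
    (B : Matrix (Fin n) (Fin m) ℝ)
    (hB : LinearMap.ker Bᵀ.mulVecLin = Submodule.span ℝ {onesVec n})
    (Bc : Matrix (Fin n) (Fin mc) ℝ)
    (hBc : LinearMap.ker Bcᵀ.mulVecLin = Submodule.span ℝ {onesVec n})
    (Lc : Matrix (Fin n) (Fin n) ℝ) (hLc : Lc = Bc * Bcᵀ)
    (γc γe γp γl : ℝ) (hγc : 0 < γc) (hγe : 0 < γe) (hγp : 0 < γp) (hγl : 0 < γl)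
    (d r xbar0 xbars : Fin n → ℝ)
    (xbar : ℝ → Fin n → ℝ) (hxbar : ∀ t, xbar t = xbar0 + t • xbars)
    (Qinv : Matrix (Fin n) (Fin n) ℝ)
    (hQinv : Qinv = Matrix.diagonal fun i => (q i)⁻¹)
    (x xp : ℝ → Fin n → ℝ) (xe : ℝ → Fin m → ℝ)
    (hx : ∀ t ≥ (0:ℝ), HasDerivAt x
      (-(γc • ((B * Bᵀ) *ᵥ (x t - xbar t))) - γe • (B *ᵥ xe t)
        + Qinv *ᵥ (γp • xp t - r) + d) t)
    (hxp : ∀ t ≥ (0:ℝ), HasDerivAt xp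
      (-(γl • (Lc *ᵥ xp t)) - γp • (Qinv *ᵥ (x t - xbar t))) t)
    (hxe : ∀ t ≥ (0:ℝ), HasDerivAt xe (γe • (Bᵀ *ᵥ (x t - xbar t))) t)
    (up : ℝ → Fin n → ℝ) (hup : ∀ t, up t = Qinv *ᵥ (γp • xp t - r))
    (ubarp : Fin n → ℝ)
    (hubarp : ubarp = -(Qinv *ᵥ
      (((onesVec n ⬝ᵥ (Qinv *ᵥ onesVec n))⁻¹ • onesMat n) *ᵥ
        (d - xbars - Qinv *ᵥ r) + r))) :
    Tendsto (fun t => euclNorm (x t - xbar t)) atTop (nhds 0) ∧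
    Tendsto (fun t => euclNorm (up t - ubarp)) atTop (nhds 0) := by
  obtain ⟨i0, j0, hij⟩ := hq2
  have hn : 0 < n := i0.pos
  have hnR : (0:ℝ) < n := Nat.cast_pos.2 hn
  set ones : Fin n → ℝ := onesVec n with hones
  -- kernel facts
  have hB1 : Bᵀ *ᵥ ones = 0 := by
    have h1 : ones ∈ LinearMap.ker Bᵀ.mulVecLin := by
      rw [hB]; exact Submodule.mem_span_singleton_self _
    have h2 := LinearMap.mem_ker.1 h1
    rwa [Matrix.mulVecLin_apply] at h2
  have hBc1 : Bcᵀ *ᵥ ones = 0 := by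
    have h1 : ones ∈ LinearMap.ker Bcᵀ.mulVecLin := by
      rw [hBc]; exact Submodule.mem_span_singleton_self _
    have h2 := LinearMap.mem_ker.1 h1
    rwa [Matrix.mulVecLin_apply] at h2
  -- Qinv facts
  have hQones : Qinv *ᵥ ones = fun i => (q i)⁻¹ := by
    funext i
    simp [hQinv, Matrix.mulVec_diagonal, hones, onesVec]
  have hQsymm : ∀ u v : Fin n → ℝ, u ⬝ᵥ (Qinv *ᵥ v) = (Qinv *ᵥ u) ⬝ᵥ v := by
    intro u v
    rw [Matrix.dotProduct_mulVec, ← Matrix.mulVec_transpose]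
    congr 1
    rw [hQinv, Matrix.diagonal_transpose]
  set d1 : ℝ := ones ⬝ᵥ (Qinv *ᵥ ones) with hd1
  have hd1pos : 0 < d1 := by
    rw [hd1, hQones]
    have : ones ⬝ᵥ (fun i => (q i)⁻¹) = ∑ i, (q i)⁻¹ := by
      simp [hones, onesVec, dotProduct]
    rw [this]
    exact Finset.sum_pos (fun i _ => inv_pos.2 (hq i)) ⟨i0, Finset.mem_univ i0⟩
  set β : ℝ := (ones ⬝ᵥ (d - xbars - Qinv *ᵥ r)) / d1 with hβ
  set xbp : Fin n → ℝ := (-β / γp) • ones with hxbp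
  have hγpxbp : γp • xbp = -β • ones := by
    rw [hxbp, smul_smul]
    congr 1
    field_simp
  set u0 : Fin n → ℝ := Qinv *ᵥ (γp • xbp - r) with hu0
  have hu0' : u0 = -β • (Qinv *ᵥ ones) - Qinv *ᵥ r := by
    rw [hu0, hγpxbp, Matrix.mulVec_sub, Matrix.mulVec_smul]
  -- ubarp = u0
  have hubarp' : ubarp = u0 := by
    rw [hubarp, hu0, hγpxbp]
    rw [Matrix.smul_mulVec, onesMat_mulVec, ← hones, ← Matrix.mulVec_neg]
    congr 1
    rw [smul_smul, neg_add, ← neg_smul, sub_eq_add_neg]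
    congr 2
    rw [hβ, div_eq_inv_mul]
    simp only [sub_eq_add_neg]
  -- cbar
  set cbar : Fin n → ℝ := u0 + d - xbars with hcbar
  have hcbar0 : ones ⬝ᵥ cbar = 0 := by
    rw [hcbar, hu0']
    have hβd1 : β * d1 = ones ⬝ᵥ (d - xbars - Qinv *ᵥ r) := by
      rw [hβ]; field_simp
    simp only [dotProduct_sub, dotProduct_add, dotProduct_smul]
    simp only [dotProduct_sub] at hβd1
    rw [← hd1] at *
    rw [smul_eq_mul]
    nlinarith [hβd1]
  -- solvability for wb
  obtain ⟨wb, hwb⟩ := exists_mulVec_eq hn B hB (γe⁻¹ • cbar) (by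
    rw [dotProduct_smul, ← hones, hcbar0, smul_zero])
  have hwbc : γe • (B *ᵥ wb) = cbar := by
    rw [hwb, smul_smul, mul_inv_cancel₀ (ne_of_gt hγe), one_smul]
  -- error coordinates
  set y : ℝ → Fin n → ℝ := fun t => x t - xbar t with hy
  set z : ℝ → Fin n → ℝ := fun t => xp t - xbp with hz
  set w : ℝ → Fin m → ℝ := fun t => xe t - wb with hw
  set F : ℝ → Fin n → ℝ :=
    fun t => -(γc • ((B * Bᵀ) *ᵥ y t)) - γe • (B *ᵥ w t) + γp • (Qinv *ᵥ z t) with hF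
  set G : ℝ → Fin n → ℝ :=
    fun t => -(γl • (Lc *ᵥ z t)) - γp • (Qinv *ᵥ y t) with hG
  set H : ℝ → Fin m → ℝ := fun t => γe • (Bᵀ *ᵥ y t) with hH
  have hyzw : ∀ t, x t - xbar t = y t ∧ xp t = z t + xbp ∧ xe t = w t + wb := by
    intro t
    refine ⟨rfl, ?_, ?_⟩
    · show xp t = (xp t - xbp) + xbp
      abel
    · show xe t = (xe t - wb) + wb
      abel
  have hyd : ∀ t ≥ (0:ℝ), HasDerivAt y (F t) t := by
    intro t ht
    have hxbarderiv : HasDerivAt xbar xbars t := by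
      have hfun : xbar = fun s => xbar0 + s • xbars := funext hxbar
      rw [hfun]
      simpa using ((hasDerivAt_id t).smul_const xbars).const_add xbar0
    have h1 := (hx t ht).sub hxbarderiv
    refine HasDerivAt.congr_deriv h1 ?_
    have e1 : Qinv *ᵥ (γp • xp t - r) = γp • (Qinv *ᵥ z t) + u0 := by
      rw [hu0, ← Matrix.mulVec_smul, ← Matrix.mulVec_add]
      congr 1
      rw [(hyzw t).2.1, smul_add]
      abel
    have e2 : γe • (B *ᵥ xe t) = γe • (B *ᵥ w t) + cbar := by
      rw [← hwbc, (hyzw t).2.2, Matrix.mulVec_add, smul_add]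
    rw [e1, e2, hcbar]
    simp only [hF]
    abel
  have hzd : ∀ t ≥ (0:ℝ), HasDerivAt z (G t) t := by
    intro t ht
    have h1 := (hxp t ht).sub_const xbp
    refine HasDerivAt.congr_deriv h1 ?_
    have hLcxbp : Lc *ᵥ xbp = 0 := by
      rw [hLc, hxbp, Matrix.mulVec_smul, ← Matrix.mulVec_mulVec, hBc1, Matrix.mulVec_zero,
        smul_zero]
    have e1 : Lc *ᵥ xp t = Lc *ᵥ z t := by
      rw [(hyzw t).2.1, Matrix.mulVec_add, hLcxbp, add_zero]
    simp only [hG]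
    rw [e1]
  have hwd : ∀ t ≥ (0:ℝ), HasDerivAt w (H t) t := by
    intro t ht
    have h1 := (hxe t ht).sub_const wb
    convert h1 using 1
  -- Lyapunov function
  set nBy : ℝ → ℝ := fun t => (Bᵀ *ᵥ y t) ⬝ᵥ (Bᵀ *ᵥ y t) with hnBy
  set nBz : ℝ → ℝ := fun t => (Bcᵀ *ᵥ z t) ⬝ᵥ (Bcᵀ *ᵥ z t) with hnBz
  set V : ℝ → ℝ := fun t => y t ⬝ᵥ y t + z t ⬝ᵥ z t + w t ⬝ᵥ w t with hV
  have hVd : ∀ t ≥ (0:ℝ), HasDerivAt V (-((2*γc) * nBy t + (2*γl) * nBz t)) t := by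
    intro t ht
    have h1 := (hasDerivAt_dot (hyd t ht) (hyd t ht)).add
      ((hasDerivAt_dot (hzd t ht) (hzd t ht)).add
        (hasDerivAt_dot (hwd t ht) (hwd t ht)))
    have h2 : ((fun s => y s ⬝ᵥ y s) + ((fun s => z s ⬝ᵥ z s) + fun s => w s ⬝ᵥ w s)) = V := by
      funext s; rw [hV]; simp only [Pi.add_apply]; ring
    rw [h2] at h1
    refine HasDerivAt.congr_deriv h1 ?_
    -- algebraic identity for the derivative
    have c1 : F t ⬝ᵥ y t = y t ⬝ᵥ F t := dotProduct_comm _ _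
    have c2 : G t ⬝ᵥ z t = z t ⬝ᵥ G t := dotProduct_comm _ _
    have c3 : H t ⬝ᵥ w t = w t ⬝ᵥ H t := dotProduct_comm _ _
    have e1 : y t ⬝ᵥ ((B * Bᵀ) *ᵥ y t) = nBy t := by
      rw [← Matrix.mulVec_mulVec, dot_mulVec', hnBy]
    have e2 : y t ⬝ᵥ (B *ᵥ w t) = (Bᵀ *ᵥ y t) ⬝ᵥ w t := dot_mulVec' _ _ _
    have e3 : z t ⬝ᵥ (Lc *ᵥ z t) = nBz t := by
      rw [hLc, ← Matrix.mulVec_mulVec, dot_mulVec', hnBz]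
    have e4 : z t ⬝ᵥ (Qinv *ᵥ y t) = y t ⬝ᵥ (Qinv *ᵥ z t) := by
      rw [hQsymm, dotProduct_comm]
    have e5 : w t ⬝ᵥ (Bᵀ *ᵥ y t) = (Bᵀ *ᵥ y t) ⬝ᵥ w t := dotProduct_comm _ _
    rw [c1, c2, c3]
    simp only [hF, hG, hH, dotProduct_add, dotProduct_sub, dotProduct_neg,
      dotProduct_smul, smul_eq_mul]
    rw [e1, e2, e3, e4, e5]
    ring
  -- continuity of states on [0,∞)
  have hycont : ContinuousOn y (Set.Ici 0) :=
    fun t ht => (hyd t ht).continuousAt.continuousWithinAt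
  have hzcont : ContinuousOn z (Set.Ici 0) :=
    fun t ht => (hzd t ht).continuousAt.continuousWithinAt
  have hwcont : ContinuousOn w (Set.Ici 0) :=
    fun t ht => (hwd t ht).continuousAt.continuousWithinAt
  have hnBynn : ∀ t, 0 ≤ nBy t := fun t => dotProduct_self_nonneg' _
  have hnBznn : ∀ t, 0 ≤ nBz t := fun t => dotProduct_self_nonneg' _
  -- V is antitone
  have hVanti : AntitoneOn V (Set.Ici 0) := by
    apply antitoneOn_of_deriv_nonpos (convex_Ici 0)
    · exact fun t ht => (hVd t ht).continuousAt.continuousWithinAt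
    · intro t ht
      rw [interior_Ici] at ht
      exact (hVd t ht.le).differentiableAt.differentiableWithinAt
    · intro t ht
      rw [interior_Ici] at ht
      rw [(hVd t ht.le).deriv]
      have h1 := hnBynn t
      have h2 := hnBznn t
      nlinarith
  set V0 : ℝ := V 0 with hV0
  have hVle : ∀ t ≥ (0:ℝ), V t ≤ V0 := fun t ht => hVanti Set.self_mem_Ici ht ht
  have hVnn : ∀ t, 0 ≤ V t := by
    intro t
    simp only [hV]
    have := dotProduct_self_nonneg' (y t)
    have := dotProduct_self_nonneg' (z t)
    have := dotProduct_self_nonneg' (w t)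
    linarith
  set R0 : ℝ := Real.sqrt V0 with hR0
  have hR0nn : 0 ≤ R0 := Real.sqrt_nonneg _
  have hybd : ∀ t ≥ (0:ℝ), ‖y t‖ ≤ R0 := by
    intro t ht
    apply norm_le_sqrt_dot
    have h1 := hVle t ht
    have h2 := dotProduct_self_nonneg' (z t)
    have h3 := dotProduct_self_nonneg' (w t)
    simp only [hV] at h1
    linarith
  have hzbd : ∀ t ≥ (0:ℝ), ‖z t‖ ≤ R0 := by
    intro t ht
    apply norm_le_sqrt_dot
    have h1 := hVle t ht
    have h2 := dotProduct_self_nonneg' (y t)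
    have h3 := dotProduct_self_nonneg' (w t)
    simp only [hV] at h1
    linarith
  have hwbd : ∀ t ≥ (0:ℝ), ‖w t‖ ≤ R0 := by
    intro t ht
    apply norm_le_sqrt_dot
    have h1 := hVle t ht
    have h2 := dotProduct_self_nonneg' (y t)
    have h3 := dotProduct_self_nonneg' (z t)
    simp only [hV] at h1
    linarith
  -- operator norm constants
  obtain ⟨CBB, hCBB0, hCBB⟩ := mulVec_norm_le (B * Bᵀ)
  obtain ⟨CB, hCB0, hCB⟩ := mulVec_norm_le B
  obtain ⟨CBt, hCBt0, hCBt⟩ := mulVec_norm_le Bᵀ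
  obtain ⟨CBct, hCBct0, hCBct⟩ := mulVec_norm_le Bcᵀ
  obtain ⟨CLc, hCLc0, hCLc⟩ := mulVec_norm_le Lc
  obtain ⟨CQ, hCQ0, hCQ⟩ := mulVec_norm_le Qinv
  -- derivative bounds
  set MF : ℝ := γc * (CBB * R0) + γe * (CB * R0) + γp * (CQ * R0) with hMF
  set MG : ℝ := γl * (CLc * R0) + γp * (CQ * R0) with hMG
  set MH : ℝ := γe * (CBt * R0) with hMH
  have hsmulbd : ∀ (γ : ℝ) (C : ℝ) (R : ℝ) {a b : ℕ} (A : Matrix (Fin a) (Fin b) ℝ)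
      (v : Fin b → ℝ), 0 < γ → 0 ≤ C → (∀ u, ‖A *ᵥ u‖ ≤ C * ‖u‖) → ‖v‖ ≤ R →
      ‖γ • (A *ᵥ v)‖ ≤ γ * (C * R) := by
    intro γ C R a b A v hγ hC hA hv
    rw [norm_smul, Real.norm_eq_abs, abs_of_pos hγ]
    apply mul_le_mul_of_nonneg_left _ hγ.le
    exact le_trans (hA v) (mul_le_mul_of_nonneg_left hv hC)
  have hFbd : ∀ t ≥ (0:ℝ), ‖F t‖ ≤ MF := by
    intro t ht
    have h1 := hsmulbd γc CBB R0 (B * Bᵀ) (y t) hγc hCBB0 hCBB (hybd t ht)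
    have h2 := hsmulbd γe CB R0 B (w t) hγe hCB0 hCB (hwbd t ht)
    have h3 := hsmulbd γp CQ R0 Qinv (z t) hγp hCQ0 hCQ (hzbd t ht)
    calc ‖F t‖ ≤ ‖-(γc • ((B * Bᵀ) *ᵥ y t)) - γe • (B *ᵥ w t)‖ + ‖γp • (Qinv *ᵥ z t)‖ :=
          norm_add_le _ _
      _ ≤ ‖γc • ((B * Bᵀ) *ᵥ y t)‖ + ‖γe • (B *ᵥ w t)‖ + ‖γp • (Qinv *ᵥ z t)‖ := by
          have h4 := norm_sub_le (-(γc • ((B * Bᵀ) *ᵥ y t))) (γe • (B *ᵥ w t))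
          rw [norm_neg] at h4
          linarith
      _ ≤ MF := by rw [hMF]; linarith
  have hGbd : ∀ t ≥ (0:ℝ), ‖G t‖ ≤ MG := by
    intro t ht
    have h1 := hsmulbd γl CLc R0 Lc (z t) hγl hCLc0 hCLc (hzbd t ht)
    have h2 := hsmulbd γp CQ R0 Qinv (y t) hγp hCQ0 hCQ (hybd t ht)
    calc ‖G t‖ ≤ ‖γl • (Lc *ᵥ z t)‖ + ‖γp • (Qinv *ᵥ y t)‖ := by
          have h4 := norm_sub_le (-(γl • (Lc *ᵥ z t))) (γp • (Qinv *ᵥ y t))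
          rw [norm_neg] at h4
          exact h4
      _ ≤ MG := by rw [hMG]; linarith
  have hHbd : ∀ t ≥ (0:ℝ), ‖H t‖ ≤ MH := by
    intro t ht
    have h1 := hsmulbd γe CBt R0 Bᵀ (y t) hγe hCBt0 hCBt (hybd t ht)
    exact h1
  -- Lipschitz bounds for the states
  have hyLip : ∀ a b : ℝ, 0 ≤ a → a ≤ b → ‖y b - y a‖ ≤ MF * (b - a) :=
    fun a b ha hab => norm_sub_le_of_hasDerivAt hyd hFbd ha hab
  have hzLip : ∀ a b : ℝ, 0 ≤ a → a ≤ b → ‖z b - z a‖ ≤ MG * (b - a) :=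
    fun a b ha hab => norm_sub_le_of_hasDerivAt hzd hGbd ha hab
  have hwLip : ∀ a b : ℝ, 0 ≤ a → a ≤ b → ‖w b - w a‖ ≤ MH * (b - a) :=
    fun a b ha hab => norm_sub_le_of_hasDerivAt hwd hHbd ha hab
  have hMFnn : 0 ≤ MF := le_trans (norm_nonneg _) (hFbd 0 le_rfl)
  have hMGnn : 0 ≤ MG := le_trans (norm_nonneg _) (hGbd 0 le_rfl)
  -- Integral bound
  have hnBycont : ContinuousOn nBy (Set.Ici 0) := by
    have h1 : Continuous (fun v : Fin n → ℝ => (Bᵀ *ᵥ v) ⬝ᵥ (Bᵀ *ᵥ v)) :=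
      continuous_dot_self.comp (continuous_mulVec' Bᵀ)
    exact h1.comp_continuousOn hycont
  have hnBzcont : ContinuousOn nBz (Set.Ici 0) := by
    have h1 : Continuous (fun v : Fin n → ℝ => (Bcᵀ *ᵥ v) ⬝ᵥ (Bcᵀ *ᵥ v)) :=
      continuous_dot_self.comp (continuous_mulVec' Bcᵀ)
    exact h1.comp_continuousOn hzcont
  have hIntAll : ∀ T ≥ (0:ℝ), ∫ t in (0:ℝ)..T, ((2*γc) * nBy t + (2*γl) * nBz t) = V0 - V T := by
    intro T hT
    have hsub : Set.uIcc (0:ℝ) T ⊆ Set.Ici 0 := by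
      rw [Set.uIcc_of_le hT]
      exact fun s hs => hs.1
    have hint : IntervalIntegrable (fun t => (2*γc) * nBy t + (2*γl) * nBz t)
        MeasureTheory.volume 0 T := by
      apply ContinuousOn.intervalIntegrable
      exact (((hnBycont.mono hsub).const_smul ((2:ℝ)*γc)).add
        ((hnBzcont.mono hsub).const_smul ((2:ℝ)*γl)))
    have h1 : ∫ t in (0:ℝ)..T, (-((2*γc) * nBy t + (2*γl) * nBz t)) = V T - V 0 := by
      apply intervalIntegral.integral_eq_sub_of_hasDerivAt
      · intro s hs
        rw [Set.uIcc_of_le hT] at hs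
        exact hVd s hs.1
      · exact hint.neg
    rw [intervalIntegral.integral_neg] at h1
    linarith [h1]
  have hIntBy : ∀ T ≥ (0:ℝ), ∫ t in (0:ℝ)..T, nBy t ≤ V0 / (2*γc) := by
    intro T hT
    have hsub : Set.uIcc (0:ℝ) T ⊆ Set.Ici 0 := by
      rw [Set.uIcc_of_le hT]; exact fun s hs => hs.1
    have hint1 : IntervalIntegrable nBy MeasureTheory.volume 0 T :=
      (hnBycont.mono hsub).intervalIntegrable
    have hint2 : IntervalIntegrable (fun t => (2*γc) * nBy t + (2*γl) * nBz t)
        MeasureTheory.volume 0 T := by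
      apply ContinuousOn.intervalIntegrable
      exact (((hnBycont.mono hsub).const_smul ((2:ℝ)*γc)).add
        ((hnBzcont.mono hsub).const_smul ((2:ℝ)*γl)))
    have h1 : ∫ t in (0:ℝ)..T, (2*γc) * nBy t ≤ ∫ t in (0:ℝ)..T, ((2*γc) * nBy t + (2*γl) * nBz t) := by
      apply intervalIntegral.integral_mono_on hT (hint1.const_mul _) hint2
      intro s hs
      have := hnBznn s
      nlinarith
    rw [intervalIntegral.integral_const_mul] at h1
    have h2 := hIntAll T hT
    have h3 := hVnn T
    rw [le_div_iff₀ (by positivity : (0:ℝ) < 2*γc)]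
    nlinarith
  have hIntBz : ∀ T ≥ (0:ℝ), ∫ t in (0:ℝ)..T, nBz t ≤ V0 / (2*γl) := by
    intro T hT
    have hsub : Set.uIcc (0:ℝ) T ⊆ Set.Ici 0 := by
      rw [Set.uIcc_of_le hT]; exact fun s hs => hs.1
    have hint1 : IntervalIntegrable nBz MeasureTheory.volume 0 T :=
      (hnBzcont.mono hsub).intervalIntegrable
    have hint2 : IntervalIntegrable (fun t => (2*γc) * nBy t + (2*γl) * nBz t)
        MeasureTheory.volume 0 T := by
      apply ContinuousOn.intervalIntegrable
      exact (((hnBycont.mono hsub).const_smul ((2:ℝ)*γc)).add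
        ((hnBzcont.mono hsub).const_smul ((2:ℝ)*γl)))
    have h1 : ∫ t in (0:ℝ)..T, (2*γl) * nBz t ≤ ∫ t in (0:ℝ)..T, ((2*γc) * nBy t + (2*γl) * nBz t) := by
      apply intervalIntegral.integral_mono_on hT (hint1.const_mul _) hint2
      intro s hs
      have := hnBynn s
      nlinarith
    rw [intervalIntegral.integral_const_mul] at h1
    have h2 := hIntAll T hT
    have h3 := hVnn T
    rw [le_div_iff₀ (by positivity : (0:ℝ) < 2*γl)]
    nlinarith
  -- Lipschitz bounds for nBy, nBz
  have hnByLip : ∀ a b : ℝ, 0 ≤ a → a ≤ b →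
      |nBy b - nBy a| ≤ ((m:ℝ) * (CBt * MF) * (2 * (CBt * R0)) + 1) * (b - a) := by
    intro a b ha hab
    have h1 : nBy b - nBy a = (Bᵀ *ᵥ y b - Bᵀ *ᵥ y a) ⬝ᵥ (Bᵀ *ᵥ y b + Bᵀ *ᵥ y a) := by
      rw [hnBy]; exact dot_sub_dot _ _
    rw [h1]
    have h2 : Bᵀ *ᵥ y b - Bᵀ *ᵥ y a = Bᵀ *ᵥ (y b - y a) := (Matrix.mulVec_sub _ _ _).symm
    have h3 : ‖Bᵀ *ᵥ y b - Bᵀ *ᵥ y a‖ ≤ CBt * (MF * (b - a)) := by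
      rw [h2]
      exact le_trans (hCBt _) (mul_le_mul_of_nonneg_left (hyLip a b ha hab) hCBt0)
    have h4 : ‖Bᵀ *ᵥ y b + Bᵀ *ᵥ y a‖ ≤ 2 * (CBt * R0) := by
      calc ‖Bᵀ *ᵥ y b + Bᵀ *ᵥ y a‖ ≤ ‖Bᵀ *ᵥ y b‖ + ‖Bᵀ *ᵥ y a‖ := norm_add_le _ _
        _ ≤ 2 * (CBt * R0) := by
            have hb1 := le_trans (hCBt (y b)) (mul_le_mul_of_nonneg_left (hybd b (le_trans ha hab)) hCBt0)
            have hb2 := le_trans (hCBt (y a)) (mul_le_mul_of_nonneg_left (hybd a ha) hCBt0)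
            linarith
    calc |(Bᵀ *ᵥ y b - Bᵀ *ᵥ y a) ⬝ᵥ (Bᵀ *ᵥ y b + Bᵀ *ᵥ y a)|
        ≤ (m:ℝ) * ‖Bᵀ *ᵥ y b - Bᵀ *ᵥ y a‖ * ‖Bᵀ *ᵥ y b + Bᵀ *ᵥ y a‖ := dot_abs_le _ _
      _ ≤ (m:ℝ) * (CBt * (MF * (b - a))) * (2 * (CBt * R0)) := by
          apply mul_le_mul
          · exact mul_le_mul_of_nonneg_left h3 (Nat.cast_nonneg m)
          · exact h4
          · exact norm_nonneg _
          · exact mul_nonneg (Nat.cast_nonneg m)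
              (mul_nonneg hCBt0 (mul_nonneg hMFnn (by linarith)))
      _ ≤ ((m:ℝ) * (CBt * MF) * (2 * (CBt * R0)) + 1) * (b - a) := by nlinarith [norm_nonneg (Bᵀ *ᵥ y b + Bᵀ *ᵥ y a)]
  have hMHnn : 0 ≤ MH := le_trans (norm_nonneg _) (hHbd 0 le_rfl)
  have hnBzLip : ∀ a b : ℝ, 0 ≤ a → a ≤ b →
      |nBz b - nBz a| ≤ ((mc:ℝ) * (CBct * MG) * (2 * (CBct * R0)) + 1) * (b - a) := by
    intro a b ha hab
    have h1 : nBz b - nBz a = (Bcᵀ *ᵥ z b - Bcᵀ *ᵥ z a) ⬝ᵥ (Bcᵀ *ᵥ z b + Bcᵀ *ᵥ z a) := by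
      rw [hnBz]; exact dot_sub_dot _ _
    rw [h1]
    have h2 : Bcᵀ *ᵥ z b - Bcᵀ *ᵥ z a = Bcᵀ *ᵥ (z b - z a) := (Matrix.mulVec_sub _ _ _).symm
    have h3 : ‖Bcᵀ *ᵥ z b - Bcᵀ *ᵥ z a‖ ≤ CBct * (MG * (b - a)) := by
      rw [h2]
      exact le_trans (hCBct _) (mul_le_mul_of_nonneg_left (hzLip a b ha hab) hCBct0)
    have h4 : ‖Bcᵀ *ᵥ z b + Bcᵀ *ᵥ z a‖ ≤ 2 * (CBct * R0) := by
      calc ‖Bcᵀ *ᵥ z b + Bcᵀ *ᵥ z a‖ ≤ ‖Bcᵀ *ᵥ z b‖ + ‖Bcᵀ *ᵥ z a‖ := norm_add_le _ _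
        _ ≤ 2 * (CBct * R0) := by
            have hb1 := le_trans (hCBct (z b)) (mul_le_mul_of_nonneg_left (hzbd b (le_trans ha hab)) hCBct0)
            have hb2 := le_trans (hCBct (z a)) (mul_le_mul_of_nonneg_left (hzbd a ha) hCBct0)
            linarith
    calc |(Bcᵀ *ᵥ z b - Bcᵀ *ᵥ z a) ⬝ᵥ (Bcᵀ *ᵥ z b + Bcᵀ *ᵥ z a)|
        ≤ (mc:ℝ) * ‖Bcᵀ *ᵥ z b - Bcᵀ *ᵥ z a‖ * ‖Bcᵀ *ᵥ z b + Bcᵀ *ᵥ z a‖ := dot_abs_le _ _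
      _ ≤ (mc:ℝ) * (CBct * (MG * (b - a))) * (2 * (CBct * R0)) := by
          apply mul_le_mul
          · exact mul_le_mul_of_nonneg_left h3 (Nat.cast_nonneg mc)
          · exact h4
          · exact norm_nonneg _
          · exact mul_nonneg (Nat.cast_nonneg mc)
              (mul_nonneg hCBct0 (mul_nonneg hMGnn (by linarith)))
      _ ≤ ((mc:ℝ) * (CBct * MG) * (2 * (CBct * R0)) + 1) * (b - a) := by
          nlinarith [norm_nonneg (Bcᵀ *ᵥ z b + Bcᵀ *ᵥ z a)]
  have hnByM : (0:ℝ) < (m:ℝ) * (CBt * MF) * (2 * (CBt * R0)) + 1 := by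
    have h0 := mul_nonneg (mul_nonneg (Nat.cast_nonneg m) (mul_nonneg hCBt0 hMFnn))
      (mul_nonneg (by norm_num : (0:ℝ) ≤ 2) (mul_nonneg hCBt0 hR0nn))
    linarith
  have hnBzM : (0:ℝ) < (mc:ℝ) * (CBct * MG) * (2 * (CBct * R0)) + 1 := by
    have h0 := mul_nonneg (mul_nonneg (Nat.cast_nonneg mc) (mul_nonneg hCBct0 hMGnn))
      (mul_nonneg (by norm_num : (0:ℝ) ≤ 2) (mul_nonneg hCBct0 hR0nn))
    linarith
  have hnByto : Tendsto nBy atTop (nhds 0) :=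
    tendsto_zero_of_l2 hnByM (fun t _ => hnBynn t) hnByLip hIntBy
  have hnBzto : Tendsto nBz atTop (nhds 0) :=
    tendsto_zero_of_l2 hnBzM (fun t _ => hnBznn t) hnBzLip hIntBz
  have hByto : Tendsto (fun t => Bᵀ *ᵥ y t) atTop (nhds 0) := by
    rw [tendsto_pi_nhds]
    intro i
    have hsq : Tendsto (fun t => Real.sqrt (nBy t)) atTop (nhds 0) := by
      have h1 := (Real.continuous_sqrt.tendsto 0).comp hnByto
      simpa [Real.sqrt_zero, Function.comp_def] using h1
    simp only [Pi.zero_apply]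
    apply squeeze_zero_norm _ hsq
    intro t
    have h2 := abs_component_le_sqrt_dot (Bᵀ *ᵥ y t) i
    simp only [hnBy]
    exact h2
  have hBczto : Tendsto (fun t => Bcᵀ *ᵥ z t) atTop (nhds 0) := by
    rw [tendsto_pi_nhds]
    intro i
    have hsq : Tendsto (fun t => Real.sqrt (nBz t)) atTop (nhds 0) := by
      have h1 := (Real.continuous_sqrt.tendsto 0).comp hnBzto
      simpa [Real.sqrt_zero, Function.comp_def] using h1
    simp only [Pi.zero_apply]
    apply squeeze_zero_norm _ hsq
    intro t
    have h2 := abs_component_le_sqrt_dot (Bcᵀ *ᵥ z t) i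
    simp only [hnBz]
    exact h2
  set Pm : Matrix (Fin n) (Fin n) ℝ := 1 - (n:ℝ)⁻¹ • onesMat n with hPmdef
  have hPmmul : ∀ u : Fin n → ℝ, Pm *ᵥ u = u - ((n:ℝ)⁻¹ * (ones ⬝ᵥ u)) • ones := by
    intro u
    rw [hPmdef, Matrix.sub_mulVec, Matrix.one_mulVec, Matrix.smul_mulVec,
      onesMat_mulVec, smul_smul, ← hones]
  have hPmones : Pm *ᵥ ones = 0 := by
    rw [hPmmul, hones, onesVec_dot_onesVec, inv_mul_cancel₀ hnR.ne', one_smul, sub_self]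
  have hdecomp : ∀ u : Fin n → ℝ, u = Pm *ᵥ u + ((n:ℝ)⁻¹ * (ones ⬝ᵥ u)) • ones := by
    intro u
    rw [hPmmul]
    abel
  have hPmT : Pmᵀ = Pm := by
    have h1 : (onesMat n)ᵀ = onesMat n := by
      ext i j
      simp [onesMat]
    rw [hPmdef, Matrix.transpose_sub, Matrix.transpose_one, Matrix.transpose_smul, h1]
  have hPmsym : ∀ u v : Fin n → ℝ, (Pm *ᵥ u) ⬝ᵥ v = u ⬝ᵥ (Pm *ᵥ v) := by
    intro u v
    rw [dot_mulVec' Pm u v, hPmT]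
  have hspanle : Submodule.span ℝ {ones} ≤ LinearMap.ker Pm.mulVecLin := by
    rw [Submodule.span_le, Set.singleton_subset_iff]
    refine LinearMap.mem_ker.2 ?_
    rw [Matrix.mulVecLin_apply]
    exact hPmones
  obtain ⟨Cc, hCc⟩ := exists_norm_le_comp Bcᵀ.mulVecLin Pm.mulVecLin (by rw [hBc]; exact hspanle)
  obtain ⟨Cy, hCy⟩ := exists_norm_le_comp Bᵀ.mulVecLin Pm.mulVecLin (by rw [hB]; exact hspanle)
  have hPzto : Tendsto (fun t => Pm *ᵥ z t) atTop (nhds 0) := by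
    apply squeeze_zero_norm (a := fun t => Cc * ‖Bcᵀ *ᵥ z t‖)
    · intro t
      have h1 := hCc (z t)
      simp only [Matrix.mulVecLin_apply] at h1
      exact h1
    · have h1 : Tendsto (fun t => ‖Bcᵀ *ᵥ z t‖) atTop (nhds 0) := by
        simpa using hBczto.norm
      simpa using h1.const_mul Cc
  have hPyto : Tendsto (fun t => Pm *ᵥ y t) atTop (nhds 0) := by
    apply squeeze_zero_norm (a := fun t => Cy * ‖Bᵀ *ᵥ y t‖)
    · intro t
      have h1 := hCy (y t)
      simp only [Matrix.mulVecLin_apply] at h1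
      exact h1
    · have h1 : Tendsto (fun t => ‖Bᵀ *ᵥ y t‖) atTop (nhds 0) := by
        simpa using hByto.norm
      simpa using h1.const_mul Cy
  set cv : Fin n → ℝ := Pm *ᵥ (Qinv *ᵥ ones) with hcv
  have hcvne : cv ≠ 0 := by
    intro h0
    have h1 := hdecomp (Qinv *ᵥ ones)
    rw [← hcv, h0, zero_add, hQones] at h1
    have e0 := congrFun h1 i0
    have e1 := congrFun h1 j0
    simp only [hones, onesVec, Pi.smul_apply, smul_eq_mul, mul_one] at e0 e1
    exact hij (inv_inj.mp (e0.trans e1.symm))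
  have hnc : 0 < cv ⬝ᵥ cv := by
    rcases lt_or_eq_of_le (dotProduct_self_nonneg' cv) with h | h
    · exact h
    · exact absurd (dotProduct_self_eq_zero.1 h.symm) hcvne
  have hcvones : cv ⬝ᵥ ones = 0 := by
    rw [hcv, hPmsym, hPmones, dotProduct_zero]
  have hcvQ : cv ⬝ᵥ (Qinv *ᵥ ones) = cv ⬝ᵥ cv := by
    have h1 := hdecomp (Qinv *ᵥ ones)
    rw [← hcv] at h1
    calc cv ⬝ᵥ (Qinv *ᵥ ones)
        = cv ⬝ᵥ (cv + ((n:ℝ)⁻¹ * (ones ⬝ᵥ (Qinv *ᵥ ones))) • ones) := congrArg _ h1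
      _ = cv ⬝ᵥ cv + ((n:ℝ)⁻¹ * (ones ⬝ᵥ (Qinv *ᵥ ones))) * (cv ⬝ᵥ ones) := by
          rw [dotProduct_add, dotProduct_smul, smul_eq_mul]
      _ = cv ⬝ᵥ cv := by rw [hcvones]; ring
  have hφd : ∀ t ≥ (0:ℝ), HasDerivAt (fun s => cv ⬝ᵥ z s) (cv ⬝ᵥ G t) t := by
    intro t ht
    have h1 := hasDerivAt_dot (hasDerivAt_const t cv) (hzd t ht)
    simpa using h1
  have hφconv : Tendsto (fun t => cv ⬝ᵥ z t) atTop (nhds 0) := by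
    have h1 : ∀ t, cv ⬝ᵥ z t = (Qinv *ᵥ ones) ⬝ᵥ (Pm *ᵥ z t) := by
      intro t
      rw [hcv, hPmsym]
    simp only [h1]
    have h2 := tendsto_dotProduct (tendsto_const_nhds (x := Qinv *ᵥ ones)) hPzto
    simpa using h2
  have hGsub : ∀ a b : ℝ, G b - G a
      = -(γl • (Lc *ᵥ (z b - z a))) - γp • (Qinv *ᵥ (y b - y a)) := by
    intro a b
    simp only [hG, Matrix.mulVec_sub, smul_sub]
    abel
  have hGdiff : ∀ a b : ℝ, 0 ≤ a → a ≤ b →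
      ‖G b - G a‖ ≤ (γl * (CLc * MG) + γp * (CQ * MF)) * (b - a) := by
    intro a b ha hab
    rw [hGsub]
    have e1 := hsmulbd γl CLc (MG * (b - a)) Lc (z b - z a) hγl hCLc0 hCLc (hzLip a b ha hab)
    have e2 := hsmulbd γp CQ (MF * (b - a)) Qinv (y b - y a) hγp hCQ0 hCQ (hyLip a b ha hab)
    calc ‖-(γl • (Lc *ᵥ (z b - z a))) - γp • (Qinv *ᵥ (y b - y a))‖
        ≤ ‖γl • (Lc *ᵥ (z b - z a))‖ + ‖γp • (Qinv *ᵥ (y b - y a))‖ := by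
          have h4 := norm_sub_le (-(γl • (Lc *ᵥ (z b - z a)))) (γp • (Qinv *ᵥ (y b - y a)))
          rw [norm_neg] at h4
          exact h4
      _ ≤ (γl * (CLc * MG) + γp * (CQ * MF)) * (b - a) := by nlinarith
  set Mφ : ℝ := (n:ℝ) * ‖cv‖ * (γl * (CLc * MG) + γp * (CQ * MF)) + 1 with hMφ
  have hMφpos : 0 < Mφ := by
    have h1 : 0 ≤ γl * (CLc * MG) + γp * (CQ * MF) := by
      have h2 := mul_nonneg hγl.le (mul_nonneg hCLc0 hMGnn)
      have h3 := mul_nonneg hγp.le (mul_nonneg hCQ0 hMFnn)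
      linarith
    have h2 := mul_nonneg (mul_nonneg (Nat.cast_nonneg n) (norm_nonneg cv)) h1
    rw [hMφ]
    linarith
  have hφlip : ∀ a b : ℝ, 0 ≤ a → a ≤ b →
      |cv ⬝ᵥ G b - cv ⬝ᵥ G a| ≤ Mφ * (b - a) := by
    intro a b ha hab
    have h1 : cv ⬝ᵥ G b - cv ⬝ᵥ G a = cv ⬝ᵥ (G b - G a) := (dotProduct_sub _ _ _).symm
    rw [h1]
    have h2 := hGdiff a b ha hab
    calc |cv ⬝ᵥ (G b - G a)| ≤ (n:ℝ) * ‖cv‖ * ‖G b - G a‖ := dot_abs_le _ _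
      _ ≤ Mφ * (b - a) := by
          have h3 := mul_le_mul_of_nonneg_left h2
            (mul_nonneg (Nat.cast_nonneg n) (norm_nonneg cv))
          rw [hMφ]
          nlinarith [norm_nonneg (G b - G a)]
  have hφ'to : Tendsto (fun t => cv ⬝ᵥ G t) atTop (nhds 0) :=
    tendsto_deriv_zero_of_tendsto hMφpos hφd hφlip hφconv
  have hLcz : Tendsto (fun t => cv ⬝ᵥ (Lc *ᵥ z t)) atTop (nhds 0) := by
    have h1 : ∀ t, Lc *ᵥ z t = Bc *ᵥ (Bcᵀ *ᵥ z t) := by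
      intro t
      rw [hLc, ← Matrix.mulVec_mulVec]
    simp only [h1]
    have h2 : Tendsto (fun t => Bc *ᵥ (Bcᵀ *ᵥ z t)) atTop (nhds 0) := by
      have h3 : Tendsto (fun t => Bc *ᵥ (Bcᵀ *ᵥ z t)) atTop (nhds (Bc *ᵥ (0 : Fin mc → ℝ))) :=
        ((continuous_mulVec' Bc).tendsto 0).comp hBczto
      rwa [Matrix.mulVec_zero] at h3
    have h4 := tendsto_dotProduct (tendsto_const_nhds (x := cv)) h2
    simpa using h4
  have hQyto : Tendsto (fun t => cv ⬝ᵥ (Qinv *ᵥ y t)) atTop (nhds 0) := by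
    have h1 : ∀ t, cv ⬝ᵥ (Qinv *ᵥ y t)
        = (-(cv ⬝ᵥ G t) - γl * (cv ⬝ᵥ (Lc *ᵥ z t))) * γp⁻¹ := by
      intro t
      simp only [hG, dotProduct_sub, dotProduct_neg, dotProduct_smul,
        smul_eq_mul]
      field_simp
      ring
    simp only [h1]
    have h2 := (hφ'to.neg.sub (hLcz.const_mul γl)).mul_const γp⁻¹
    simpa using h2
  have hkey : ∀ t, cv ⬝ᵥ (Qinv *ᵥ y t)
      = cv ⬝ᵥ (Qinv *ᵥ (Pm *ᵥ y t)) + ((n:ℝ)⁻¹ * (ones ⬝ᵥ y t)) * (cv ⬝ᵥ cv) := by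
    intro t
    calc cv ⬝ᵥ (Qinv *ᵥ y t)
        = cv ⬝ᵥ (Qinv *ᵥ (Pm *ᵥ y t + ((n:ℝ)⁻¹ * (ones ⬝ᵥ y t)) • ones)) :=
          congrArg (fun v => cv ⬝ᵥ (Qinv *ᵥ v)) (hdecomp (y t))
      _ = cv ⬝ᵥ (Qinv *ᵥ (Pm *ᵥ y t)) + ((n:ℝ)⁻¹ * (ones ⬝ᵥ y t)) * (cv ⬝ᵥ (Qinv *ᵥ ones)) := by
          rw [Matrix.mulVec_add, dotProduct_add, Matrix.mulVec_smul,
            dotProduct_smul, smul_eq_mul]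
      _ = cv ⬝ᵥ (Qinv *ᵥ (Pm *ᵥ y t)) + ((n:ℝ)⁻¹ * (ones ⬝ᵥ y t)) * (cv ⬝ᵥ cv) := by rw [hcvQ]
  have hQPyto : Tendsto (fun t => cv ⬝ᵥ (Qinv *ᵥ (Pm *ᵥ y t))) atTop (nhds 0) := by
    have h2 : Tendsto (fun t => Qinv *ᵥ (Pm *ᵥ y t)) atTop (nhds 0) := by
      have h3 : Tendsto (fun t => Qinv *ᵥ (Pm *ᵥ y t)) atTop (nhds (Qinv *ᵥ (0 : Fin n → ℝ))) :=
        ((continuous_mulVec' Qinv).tendsto 0).comp hPyto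
      rwa [Matrix.mulVec_zero] at h3
    have h4 := tendsto_dotProduct (tendsto_const_nhds (x := cv)) h2
    simpa using h4
  have hato : Tendsto (fun t => ones ⬝ᵥ y t) atTop (nhds 0) := by
    have h4 : (fun t => ((n:ℝ)⁻¹ * (ones ⬝ᵥ y t)) * (cv ⬝ᵥ cv))
        = fun t => cv ⬝ᵥ (Qinv *ᵥ y t) - cv ⬝ᵥ (Qinv *ᵥ (Pm *ᵥ y t)) := by
      funext t
      rw [hkey t]
      ring
    have h3 : Tendsto (fun t => ((n:ℝ)⁻¹ * (ones ⬝ᵥ y t)) * (cv ⬝ᵥ cv)) atTop (nhds 0) := by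
      rw [h4]
      simpa using hQyto.sub hQPyto
    have h5 : (fun t => ones ⬝ᵥ y t)
        = fun t => (((n:ℝ)⁻¹ * (ones ⬝ᵥ y t)) * (cv ⬝ᵥ cv)) * ((cv ⬝ᵥ cv)⁻¹ * (n:ℝ)) := by
      funext t
      field_simp
    rw [h5]
    simpa using h3.mul_const ((cv ⬝ᵥ cv)⁻¹ * (n:ℝ))
  have hyto : Tendsto y atTop (nhds 0) := by
    have h1 : (fun t : ℝ => y t) = fun t => Pm *ᵥ y t + ((n:ℝ)⁻¹ * (ones ⬝ᵥ y t)) • ones :=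
      funext fun t => hdecomp (y t)
    have h2 : Tendsto (fun t => Pm *ᵥ y t + ((n:ℝ)⁻¹ * (ones ⬝ᵥ y t)) • ones) atTop (nhds 0) := by
      have h3 := hPyto.add ((hato.const_mul (n:ℝ)⁻¹).smul_const ones)
      simpa using h3
    have h4 : Tendsto (fun t : ℝ => y t) atTop (nhds 0) := by
      rw [h1]
      exact h2
    exact h4
  have hgoal1 : Tendsto (fun t => euclNorm (x t - xbar t)) atTop (nhds 0) := by
    have hrw : ∀ t, x t - xbar t = y t := fun t => by rw [hy]
    simp only [hrw]
    exact tendsto_euclNorm_zero hyto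
  have hFsub : ∀ a b : ℝ, F b - F a = -(γc • ((B * Bᵀ) *ᵥ (y b - y a)))
      - γe • (B *ᵥ (w b - w a)) + γp • (Qinv *ᵥ (z b - z a)) := by
    intro a b
    simp only [hF, Matrix.mulVec_sub, smul_sub]
    abel
  set LF : ℝ := γc * (CBB * MF) + γe * (CB * MH) + γp * (CQ * MG) + 1 with hLF
  have hLFpos : 0 < LF := by
    have h1 := mul_nonneg hγc.le (mul_nonneg hCBB0 hMFnn)
    have h2 := mul_nonneg hγe.le (mul_nonneg hCB0 hMHnn)
    have h3 := mul_nonneg hγp.le (mul_nonneg hCQ0 hMGnn)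
    rw [hLF]
    linarith
  have hFlipvec : ∀ a b : ℝ, 0 ≤ a → a ≤ b → ‖F b - F a‖ ≤ LF * (b - a) := by
    intro a b ha hab
    rw [hFsub]
    have e1 := hsmulbd γc CBB (MF * (b - a)) (B * Bᵀ) (y b - y a) hγc hCBB0 hCBB (hyLip a b ha hab)
    have e2 := hsmulbd γe CB (MH * (b - a)) B (w b - w a) hγe hCB0 hCB (hwLip a b ha hab)
    have e3 := hsmulbd γp CQ (MG * (b - a)) Qinv (z b - z a) hγp hCQ0 hCQ (hzLip a b ha hab)
    calc ‖-(γc • ((B * Bᵀ) *ᵥ (y b - y a))) - γe • (B *ᵥ (w b - w a)) + γp • (Qinv *ᵥ (z b - z a))‖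
        ≤ ‖-(γc • ((B * Bᵀ) *ᵥ (y b - y a))) - γe • (B *ᵥ (w b - w a))‖
          + ‖γp • (Qinv *ᵥ (z b - z a))‖ := norm_add_le _ _
      _ ≤ ‖γc • ((B * Bᵀ) *ᵥ (y b - y a))‖ + ‖γe • (B *ᵥ (w b - w a))‖
          + ‖γp • (Qinv *ᵥ (z b - z a))‖ := by
          have h4 := norm_sub_le (-(γc • ((B * Bᵀ) *ᵥ (y b - y a)))) (γe • (B *ᵥ (w b - w a)))
          rw [norm_neg] at h4
          linarith
      _ ≤ LF * (b - a) := by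
          rw [hLF]
          nlinarith
  have hyito : ∀ i, Tendsto (fun t => y t i) atTop (nhds 0) := by
    intro i
    have h1 := (tendsto_pi_nhds.1 hyto) i
    simpa using h1
  have hFito : ∀ i, Tendsto (fun t => F t i) atTop (nhds 0) := by
    intro i
    apply tendsto_deriv_zero_of_tendsto hLFpos (f := fun t => y t i)
      (f' := fun t => F t i)
    · intro t ht
      exact (hasDerivAt_pi.1 (hyd t ht)) i
    · intro a b ha hab
      have h1 := norm_le_pi_norm (F b - F a) i
      have h2 : ‖(F b - F a) i‖ = |F b i - F a i| := by
        rw [Pi.sub_apply, Real.norm_eq_abs]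
      rw [h2] at h1
      exact le_trans h1 (hFlipvec a b ha hab)
    · exact hyito i
  have hFto : Tendsto F atTop (nhds 0) := by
    rw [tendsto_pi_nhds]
    intro i
    simpa using hFito i
  have honesF : Tendsto (fun t => ones ⬝ᵥ F t) atTop (nhds 0) := by
    have h1 := tendsto_dotProduct (tendsto_const_nhds (x := ones)) hFto
    simpa using h1
  have hcomp : ∀ t, ones ⬝ᵥ F t = γp * ((Qinv *ᵥ ones) ⬝ᵥ z t) := by
    intro t
    simp only [hF, dotProduct_add, dotProduct_sub, dotProduct_neg,
      dotProduct_smul, smul_eq_mul]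
    have e1 : ones ⬝ᵥ ((B * Bᵀ) *ᵥ y t) = 0 := by
      rw [← Matrix.mulVec_mulVec, dot_mulVec', hB1, zero_dotProduct]
    have e2 : ones ⬝ᵥ (B *ᵥ w t) = 0 := by
      rw [dot_mulVec', hB1, zero_dotProduct]
    have e3 : ones ⬝ᵥ (Qinv *ᵥ z t) = (Qinv *ᵥ ones) ⬝ᵥ z t := hQsymm ones (z t)
    rw [e1, e2, e3]
    ring
  have hQzto : Tendsto (fun t => (Qinv *ᵥ ones) ⬝ᵥ z t) atTop (nhds 0) := by
    have h7 : (fun t => (Qinv *ᵥ ones) ⬝ᵥ z t)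
        = fun t => (ones ⬝ᵥ F t) * γp⁻¹ := by
      funext t
      rw [hcomp t]
      field_simp
    rw [h7]
    simpa using honesF.mul_const γp⁻¹
  have hQPzto2 : Tendsto (fun t => (Qinv *ᵥ ones) ⬝ᵥ (Pm *ᵥ z t)) atTop (nhds 0) := by
    have h1 := tendsto_dotProduct (tendsto_const_nhds (x := Qinv *ᵥ ones)) hPzto
    simpa using h1
  have hkey2 : ∀ t, (Qinv *ᵥ ones) ⬝ᵥ z t
      = (Qinv *ᵥ ones) ⬝ᵥ (Pm *ᵥ z t) + ((n:ℝ)⁻¹ * (ones ⬝ᵥ z t)) * d1 := by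
    intro t
    calc (Qinv *ᵥ ones) ⬝ᵥ z t
        = (Qinv *ᵥ ones) ⬝ᵥ (Pm *ᵥ z t + ((n:ℝ)⁻¹ * (ones ⬝ᵥ z t)) • ones) :=
          congrArg _ (hdecomp (z t))
      _ = (Qinv *ᵥ ones) ⬝ᵥ (Pm *ᵥ z t) + ((n:ℝ)⁻¹ * (ones ⬝ᵥ z t)) * ((Qinv *ᵥ ones) ⬝ᵥ ones) := by
          rw [dotProduct_add, dotProduct_smul, smul_eq_mul]
      _ = (Qinv *ᵥ ones) ⬝ᵥ (Pm *ᵥ z t) + ((n:ℝ)⁻¹ * (ones ⬝ᵥ z t)) * d1 := by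
          rw [dotProduct_comm (Qinv *ᵥ ones) ones, ← hd1]
  have hbto : Tendsto (fun t => ones ⬝ᵥ z t) atTop (nhds 0) := by
    have h8 : (fun t => ((n:ℝ)⁻¹ * (ones ⬝ᵥ z t)) * d1)
        = fun t => (Qinv *ᵥ ones) ⬝ᵥ z t - (Qinv *ᵥ ones) ⬝ᵥ (Pm *ᵥ z t) := by
      funext t
      rw [hkey2 t]
      ring
    have h9 : Tendsto (fun t => ((n:ℝ)⁻¹ * (ones ⬝ᵥ z t)) * d1) atTop (nhds 0) := by
      rw [h8]
      simpa using hQzto.sub hQPzto2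
    have h5 : (fun t => ones ⬝ᵥ z t)
        = fun t => (((n:ℝ)⁻¹ * (ones ⬝ᵥ z t)) * d1) * (d1⁻¹ * (n:ℝ)) := by
      funext t
      field_simp
    rw [h5]
    simpa using h9.mul_const (d1⁻¹ * (n:ℝ))
  have hzto : Tendsto z atTop (nhds 0) := by
    have h1 : (fun t : ℝ => z t) = fun t => Pm *ᵥ z t + ((n:ℝ)⁻¹ * (ones ⬝ᵥ z t)) • ones :=
      funext fun t => hdecomp (z t)
    have h2 : Tendsto (fun t => Pm *ᵥ z t + ((n:ℝ)⁻¹ * (ones ⬝ᵥ z t)) • ones) atTop (nhds 0) := by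
      have h3 := hPzto.add ((hbto.const_mul (n:ℝ)⁻¹).smul_const ones)
      simpa using h3
    have h4 : Tendsto (fun t : ℝ => z t) atTop (nhds 0) := by
      rw [h1]
      exact h2
    exact h4
  refine ⟨hgoal1, ?_⟩
  have hupz : ∀ t, up t - ubarp = γp • (Qinv *ᵥ z t) := by
    intro t
    rw [hup t, hubarp', hu0, ← Matrix.mulVec_sub, ← Matrix.mulVec_smul]
    congr 1
    have hzt : z t = xp t - xbp := by rw [hz]
    rw [hzt, smul_sub]
    abel
  have h10 : Tendsto (fun t => γp • (Qinv *ᵥ z t)) atTop (nhds 0) := by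
    have h11 : Tendsto (fun t => Qinv *ᵥ z t) atTop (nhds 0) := by
      have h3 : Tendsto (fun t => Qinv *ᵥ z t) atTop (nhds (Qinv *ᵥ (0 : Fin n → ℝ))) :=
        ((continuous_mulVec' Qinv).tendsto 0).comp hzto
      rwa [Matrix.mulVec_zero] at h3
    simpa using h11.const_smul γp
  simp only [hupz]
  exact tendsto_euclNorm_zero h10
end

section
/- (Lemma A.3, bounds on û_p and x̂.) Let n ≥ 2, Q = diag(q_1,…,q_n) with q_i > 0, L_c the Laplacian of a connected undirected graph, Q̄ := Q^{-1}𝟙𝟙ᵀQ^{-1}/(𝟙ᵀQ^{-1}𝟙) − Q^{-1}, Φ := −L_cQ + (1/n)𝟙𝟙ᵀ; let γ_c, γ > 0, 0 < θ < 1, ε₁, ε₂ > 0, d̃ ∈ ℝ^n, u_p^-, u_p^+ ∈ ℝ^n, r ∈ ℝ^n, and let ū_p := −Q^{-1}( (𝟙𝟙ᵀ/(𝟙ᵀQ^{-1}𝟙)) d̃ + r ). Define δ_p := min{ min_i (u_p^+ − ū_p)_i , min_j (ū_p − u_p^-)_j }, and δ_θ := (‖Φ^{-1}Q̄²Qd̃‖/‖Φ^{-1}Q̄‖)·(θ/(1−θ))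 if ‖Φ^{-1}Q̄‖ ≠ 0, and δ_θ := +∞ otherwise. Assume γ_c < (𝟙ᵀQ^{-1}𝟙) ε₁ / ( ‖𝟙𝟙ᵀQ^{-1} Q̄ Q d̃‖ + ‖𝟙𝟙ᵀQ^{-1}‖ ε₂ ) and ‖Φ^{-1} Q̄² Q d̃‖ · γ < (1 − θ) · min{δ_p, δ_θ, ε₂}. Then with û_p := γ(γQ̄ + Φ)^{-1} Q̄² Q d̃ and x̂ := γ_c (𝟙𝟙ᵀQ^{-1}/(𝟙ᵀQ^{-1}𝟙)) (I − γ(γQ̄ + Φ)^{-1} Q̄) Q̄ Q d̃, one has ‖û_p‖ < min{ min_i (u_p^+ − ū_p)_i , min_j (ū_p − u_p^-)_j , ε₂ } and ‖x̂‖ < ε₁. -/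
open Matrix Filter

lemma euclNorm_nonneg {k : ℕ} (v : Fin k → ℝ) : 0 ≤ euclNorm v := norm_nonneg _

lemma matOpNorm_nonneg {k l : ℕ} (A : Matrix (Fin k) (Fin l) ℝ) : 0 ≤ matOpNorm A := norm_nonneg _

lemma euclNorm_eq_zero {k : ℕ} {v : Fin k → ℝ} (h : euclNorm v = 0) : v = 0 := by
  have h2 := norm_eq_zero.mp h
  have := congrArg (WithLp.equiv 2 (Fin k → ℝ)) h2
  simpa using this

lemma euclNorm_smul {k : ℕ} (c : ℝ) (v : Fin k → ℝ) : euclNorm (c • v) = |c| * euclNorm v := by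
  unfold euclNorm
  rw [show (WithLp.equiv 2 (Fin k → ℝ)).symm (c • v) = c • (WithLp.equiv 2 (Fin k → ℝ)).symm v from rfl]
  simp [norm_smul]

lemma euclNorm_sub_le {k : ℕ} (a b : Fin k → ℝ) :
    euclNorm (a - b) ≤ euclNorm a + euclNorm b := by
  unfold euclNorm
  rw [show (WithLp.equiv 2 (Fin k → ℝ)).symm (a - b)
      = (WithLp.equiv 2 (Fin k → ℝ)).symm a - (WithLp.equiv 2 (Fin k → ℝ)).symm b from rfl]
  exact norm_sub_le _ _

lemma euclNorm_mulVec_le {k l : ℕ} (A : Matrix (Fin k) (Fin l) ℝ) (v : Fin l → ℝ) :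
    euclNorm (A *ᵥ v) ≤ matOpNorm A * euclNorm v := by
  have h := (LinearMap.toContinuousLinearMap (Matrix.toEuclideanLin A)).le_opNorm
      ((WithLp.equiv 2 (Fin l → ℝ)).symm v)
  simpa [euclNorm, matOpNorm, Matrix.toLpLin_toLp, Matrix.toLin'_apply] using h

lemma laplacian_quad_nonneg {k : ℕ} (L : Matrix (Fin k) (Fin k) ℝ)
    (hsymm : L.IsSymm) (hoff : ∀ i j, i ≠ j → L i j ≤ 0)
    (h1 : L *ᵥ onesVec k = 0) (x : Fin k → ℝ) :
    0 ≤ x ⬝ᵥ (L *ᵥ x) := by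
  have hrow : ∀ i, ∑ j, L i j = 0 := by
    intro i
    have := congrFun h1 i
    simpa [Matrix.mulVec, dotProduct, onesVec] using this
  have hcol : ∀ j, ∑ i, L i j = 0 := by
    intro j
    have : ∑ i, L i j = ∑ i, L j i := by
      refine Finset.sum_congr rfl fun i _ => ?_
      have := congrFun (congrFun hsymm.eq j) i
      simpa [Matrix.transpose] using this
    rw [this]; exact hrow j
  have e1 : (∑ i, ∑ j, L i j * (x i)^2) = 0 := by
    have : ∀ i, ∑ j, L i j * (x i)^2 = (∑ j, L i j) * (x i)^2 :=
      fun i => (Finset.sum_mul _ _ _).symm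
    simp [this, hrow]
  have e3 : (∑ i, ∑ j, L i j * (x j)^2) = 0 := by
    rw [Finset.sum_comm]
    have : ∀ j, ∑ i, L i j * (x j)^2 = (∑ i, L i j) * (x j)^2 :=
      fun j => (Finset.sum_mul _ _ _).symm
    simp [this, hcol]
  have e2 : x ⬝ᵥ (L *ᵥ x) = ∑ i, ∑ j, L i j * (x i * x j) := by
    simp only [dotProduct, Matrix.mulVec, Finset.mul_sum]
    exact Finset.sum_congr rfl fun i _ => Finset.sum_congr rfl fun j _ => by ring
  have key : (∑ i, ∑ j, (-L i j) * (x i - x j)^2) + (∑ i, ∑ j, L i j * (x i)^2)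
        + (∑ i, ∑ j, L i j * (x j)^2)
      = 2 * (∑ i, ∑ j, L i j * (x i * x j)) := by
    rw [Finset.mul_sum, ← Finset.sum_add_distrib, ← Finset.sum_add_distrib]
    refine Finset.sum_congr rfl fun i _ => ?_
    rw [Finset.mul_sum, ← Finset.sum_add_distrib, ← Finset.sum_add_distrib]
    exact Finset.sum_congr rfl fun j _ => by ring
  have hnn : 0 ≤ ∑ i, ∑ j, (-L i j) * (x i - x j)^2 := by
    refine Finset.sum_nonneg fun i _ => Finset.sum_nonneg fun j _ => ?_
    rcases eq_or_ne i j with h | h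
    · simp [h]
    · exact mul_nonneg (by linarith [hoff i j h]) (sq_nonneg _)
  rw [e1, e3] at key
  rw [e2]
  linarith [key, hnn]

lemma vecMul_smulMat {k l : ℕ} (v : Fin k → ℝ) (a : ℝ) (M : Matrix (Fin k) (Fin l) ℝ) :
    v ᵥ* (a • M) = a • (v ᵥ* M) := by
  ext j
  simp only [Matrix.vecMul, dotProduct, Matrix.smul_apply, Pi.smul_apply,
    smul_eq_mul, Finset.mul_sum]
  exact Finset.sum_congr rfl fun i _ => by ring

lemma dot_onesMat_mulVec {k : ℕ} (u z : Fin k → ℝ) (hz : ∑ j, z j = 0) :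
    u ⬝ᵥ (onesMat k *ᵥ z) = 0 := by
  simp only [dotProduct, Matrix.mulVec, onesMat, Matrix.of_apply, one_mul]
  calc ∑ i, u i * ∑ j, z j = ∑ i, (0:ℝ) := by
        refine Finset.sum_congr rfl fun i _ => by rw [hz, mul_zero]
    _ = 0 := by simp

lemma s_eq {n : ℕ} (q : Fin n → ℝ) (Qinv : Matrix (Fin n) (Fin n) ℝ)
    (hQinv : Qinv = Matrix.diagonal fun i => (q i)⁻¹) :
    onesVec n ⬝ᵥ (Qinv *ᵥ onesVec n) = ∑ i, (q i)⁻¹ := by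
  subst hQinv
  simp only [dotProduct, onesVec, one_mul]
  refine Finset.sum_congr rfl fun i _ => ?_
  rw [Matrix.mulVec_diagonal]; simp [onesVec]

lemma ones_vecMul_Qbar {n : ℕ} (hn : 2 ≤ n) (q : Fin n → ℝ) (hq : ∀ i, 0 < q i)
    (Qinv Qbar : Matrix (Fin n) (Fin n) ℝ)
    (hQinv : Qinv = Matrix.diagonal fun i => (q i)⁻¹)
    (hQbar : Qbar =
      (onesVec n ⬝ᵥ (Qinv *ᵥ onesVec n))⁻¹ • (Qinv * onesMat n * Qinv) - Qinv) :
    onesVec n ᵥ* Qbar = 0 := by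
  have hs := s_eq q Qinv hQinv
  have hne : (Finset.univ : Finset (Fin n)).Nonempty := by
    refine Finset.univ_nonempty_iff.mpr ?_
    exact Fin.pos_iff_nonempty.mp (by omega)
  have hspos : 0 < ∑ i, (q i)⁻¹ :=
    Finset.sum_pos (fun i _ => inv_pos.mpr (hq i)) hne
  have hvQinv : onesVec n ᵥ* Qinv = fun i => (q i)⁻¹ := by
    ext i; rw [hQinv, Matrix.vecMul_diagonal]; simp [onesVec]
  have hqiOnes : (fun i => (q i)⁻¹) ᵥ* onesMat n = (∑ i, (q i)⁻¹) • onesVec n := by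
    ext j; simp [Matrix.vecMul, dotProduct, onesMat, onesVec]
  rw [hQbar, Matrix.vecMul_sub, vecMul_smulMat, ← Matrix.vecMul_vecMul,
    ← Matrix.vecMul_vecMul, hvQinv, hqiOnes, Matrix.smul_vecMul, hvQinv, hs]
  rw [smul_smul, inv_mul_cancel₀ hspos.ne', one_smul]
  simp

lemma ones_vecMul_Phi {n : ℕ} (hn : 2 ≤ n)
    (Lc : Matrix (Fin n) (Fin n) ℝ) (hsymm : Lc.IsSymm)
    (hLc1 : Lc *ᵥ onesVec n = 0)
    (Q Φ : Matrix (Fin n) (Fin n) ℝ)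
    (hΦ : Φ = -(Lc * Q) + (n : ℝ)⁻¹ • onesMat n) :
    onesVec n ᵥ* Φ = onesVec n := by
  have hn0 : (n : ℝ) ≠ 0 := by positivity
  have hvLc : onesVec n ᵥ* Lc = 0 := by
    rw [← hsymm.eq, Matrix.vecMul_transpose, hLc1]
  have hvOnes : onesVec n ᵥ* onesMat n = (n : ℝ) • onesVec n := by
    ext j; simp [Matrix.vecMul, dotProduct, onesMat, onesVec]
  rw [hΦ, Matrix.vecMul_add, Matrix.vecMul_neg, ← Matrix.vecMul_vecMul, hvLc,
    Matrix.zero_vecMul, vecMul_smulMat, hvOnes, smul_smul, inv_mul_cancel₀ hn0, one_smul]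
  simp

lemma dot_onesMat_mulVec' {k : ℕ} (u z : Fin k → ℝ) (hu : ∑ j, u j = 0) :
    u ⬝ᵥ (onesMat k *ᵥ z) = 0 := by
  simp only [dotProduct, Matrix.mulVec, onesMat, Matrix.of_apply, one_mul]
  rw [← Finset.sum_mul, hu, zero_mul]

lemma sum_eq_zero_of_mulVec {n : ℕ} (M : Matrix (Fin n) (Fin n) ℝ) (x : Fin n → ℝ)
    (hvM : onesVec n ᵥ* M = onesVec n) (hx : M *ᵥ x = 0) : ∑ i, x i = 0 := by
  have h0 : onesVec n ⬝ᵥ (M *ᵥ x) = 0 := by rw [hx]; simp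
  rw [Matrix.dotProduct_mulVec, hvM] at h0
  simpa [dotProduct, onesVec] using h0

lemma phi_isUnit {n : ℕ} (hn : 2 ≤ n) (q : Fin n → ℝ) (hq : ∀ i, 0 < q i)
    (Lc : Matrix (Fin n) (Fin n) ℝ) (hsymm : Lc.IsSymm)
    (hLc1 : Lc *ᵥ onesVec n = 0)
    (hker : LinearMap.ker Lc.mulVecLin = Submodule.span ℝ {onesVec n})
    (Q Φ : Matrix (Fin n) (Fin n) ℝ)
    (hQ : Q = Matrix.diagonal q)
    (hΦ : Φ = -(Lc * Q) + (n : ℝ)⁻¹ • onesMat n) :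
    IsUnit Φ := by
  rw [← Matrix.mulVec_injective_iff_isUnit]
  have key : ∀ x, Φ *ᵥ x = 0 → x = 0 := by
    intro x hx
    have hsum : ∑ i, x i = 0 :=
      sum_eq_zero_of_mulVec Φ x (ones_vecMul_Phi hn Lc hsymm hLc1 Q Φ hΦ) hx
    have hOnes : onesMat n *ᵥ x = 0 := by
      ext i
      simp only [Matrix.mulVec, dotProduct, onesMat, Matrix.of_apply, one_mul,
        Pi.zero_apply]
      exact hsum
    have hLQ : Lc *ᵥ (Q *ᵥ x) = 0 := by
      have h := hx
      rw [hΦ, Matrix.add_mulVec, Matrix.neg_mulVec, Matrix.smul_mulVec,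
        hOnes, smul_zero, add_zero, neg_eq_zero, ← Matrix.mulVec_mulVec] at h
      exact h
    have hmem : Q *ᵥ x ∈ LinearMap.ker Lc.mulVecLin := by
      rw [LinearMap.mem_ker, Matrix.mulVecLin_apply]; exact hLQ
    rw [hker, Submodule.mem_span_singleton] at hmem
    obtain ⟨c, hc⟩ := hmem
    have hxi : ∀ i, x i = c * (q i)⁻¹ := by
      intro i
      have := congrFun hc i
      rw [hQ] at this
      simp only [Pi.smul_apply, onesVec, smul_eq_mul, mul_one] at this
      rw [Matrix.mulVec_diagonal] at this
      field_simp [(hq i).ne']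
      linarith [this]
    have hs : ∑ i, x i = c * ∑ i, (q i)⁻¹ := by
      rw [Finset.mul_sum]; exact Finset.sum_congr rfl fun i _ => hxi i
    have hne : (Finset.univ : Finset (Fin n)).Nonempty :=
      Finset.univ_nonempty_iff.mpr (Fin.pos_iff_nonempty.mp (by omega))
    have hspos : 0 < ∑ i, (q i)⁻¹ :=
      Finset.sum_pos (fun i _ => inv_pos.mpr (hq i)) hne
    have hc0 : c = 0 := by
      rw [hsum] at hs
      rcases mul_eq_zero.mp hs.symm with h | h
      · exact h
      · exact absurd h hspos.ne'
    funext i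
    rw [hxi i, hc0, zero_mul]; rfl
  intro a b hab
  have : Φ *ᵥ (a - b) = 0 := by rw [Matrix.mulVec_sub, hab, sub_self]
  exact sub_eq_zero.mp (key _ this)

lemma gamma_isUnit {n : ℕ} (hn : 2 ≤ n) (q : Fin n → ℝ) (hq : ∀ i, 0 < q i)
    (Lc : Matrix (Fin n) (Fin n) ℝ) (hsymm : Lc.IsSymm)
    (hoff : ∀ i j, i ≠ j → Lc i j ≤ 0)
    (hLc1 : Lc *ᵥ onesVec n = 0)
    (Q Qinv Qbar Φ : Matrix (Fin n) (Fin n) ℝ)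
    (hQ : Q = Matrix.diagonal q)
    (hQinv : Qinv = Matrix.diagonal fun i => (q i)⁻¹)
    (hQbar : Qbar =
      (onesVec n ⬝ᵥ (Qinv *ᵥ onesVec n))⁻¹ • (Qinv * onesMat n * Qinv) - Qinv)
    (hΦ : Φ = -(Lc * Q) + (n : ℝ)⁻¹ • onesMat n)
    (γ : ℝ) (hγ : 0 < γ) :
    IsUnit (γ • Qbar + Φ) := by
  rw [← Matrix.mulVec_injective_iff_isUnit]
  have key : ∀ x, (γ • Qbar + Φ) *ᵥ x = 0 → x = 0 := by
    intro x hx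
    have hvM : onesVec n ᵥ* (γ • Qbar + Φ) = onesVec n := by
      rw [Matrix.vecMul_add, vecMul_smulMat,
        ones_vecMul_Qbar hn q hq Qinv Qbar hQinv hQbar,
        ones_vecMul_Phi hn Lc hsymm hLc1 Q Φ hΦ, smul_zero, zero_add]
    have hsum : ∑ i, x i = 0 := sum_eq_zero_of_mulVec _ x hvM hx
    set y := Q *ᵥ x with hy
    have hQdot : ∀ z, y ⬝ᵥ (Qinv *ᵥ z) = x ⬝ᵥ z := by
      intro z
      simp only [dotProduct, hy, hQ, hQinv]
      refine Finset.sum_congr rfl fun i _ => ?_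
      rw [Matrix.mulVec_diagonal, Matrix.mulVec_diagonal]
      field_simp [(hq i).ne']
    have hT1 : y ⬝ᵥ (Qbar *ᵥ x) = -(x ⬝ᵥ x) := by
      rw [hQbar, Matrix.sub_mulVec, Matrix.smul_mulVec, dotProduct_sub,
        dotProduct_smul, ← Matrix.mulVec_mulVec, ← Matrix.mulVec_mulVec,
        hQdot, hQdot, dot_onesMat_mulVec' x _ hsum]
      simp
    have hT2 : y ⬝ᵥ (Φ *ᵥ x) = -(y ⬝ᵥ (Lc *ᵥ y)) := by
      rw [hΦ, Matrix.add_mulVec, Matrix.neg_mulVec, Matrix.smul_mulVec,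
        dotProduct_add, dotProduct_neg, dotProduct_smul,
        dot_onesMat_mulVec y x hsum]
      rw [show (Lc * Q) *ᵥ x = Lc *ᵥ y from (Matrix.mulVec_mulVec x Lc Q).symm]
      simp
    have h0 : y ⬝ᵥ ((γ • Qbar + Φ) *ᵥ x) = 0 := by rw [hx]; simp
    rw [Matrix.add_mulVec, Matrix.smul_mulVec, dotProduct_add,
      dotProduct_smul, hT1, hT2, smul_eq_mul] at h0
    have hLnn : 0 ≤ y ⬝ᵥ (Lc *ᵥ y) := laplacian_quad_nonneg Lc hsymm hoff hLc1 y
    have hxx : 0 ≤ x ⬝ᵥ x := Finset.sum_nonneg fun i _ => mul_self_nonneg (x i)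
    have hxx0 : x ⬝ᵥ x = 0 := by nlinarith
    exact dotProduct_self_eq_zero.mp hxx0
  intro a b hab
  have : (γ • Qbar + Φ) *ᵥ (a - b) = 0 := by rw [Matrix.mulVec_sub, hab, sub_self]
  exact sub_eq_zero.mp (key _ this)

/-- Lemma A.3, bounds on `û_p` and `x̂`. The case `δ_θ = +∞`
(when `‖Φ⁻¹Q̄‖ = 0`) is encoded by making the corresponding gain condition
conditional on `‖Φ⁻¹Q̄‖ ≠ 0`. -/
theorem lemmaA3_up_x_bounds {n : ℕ} (hn : 2 ≤ n)
    (q : Fin n → ℝ) (hq : ∀ i, 0 < q i)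
    (Lc : Matrix (Fin n) (Fin n) ℝ) (hsymm : Lc.IsSymm)
    (hoff : ∀ i j, i ≠ j → Lc i j ≤ 0)
    (hLc1 : Lc *ᵥ onesVec n = 0)
    (hker : LinearMap.ker Lc.mulVecLin = Submodule.span ℝ {onesVec n})
    (Q Qinv Qbar Φ : Matrix (Fin n) (Fin n) ℝ)
    (hQ : Q = Matrix.diagonal q)
    (hQinv : Qinv = Matrix.diagonal fun i => (q i)⁻¹)
    (hQbar : Qbar =
      (onesVec n ⬝ᵥ (Qinv *ᵥ onesVec n))⁻¹ • (Qinv * onesMat n * Qinv) - Qinv)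
    (hΦ : Φ = -(Lc * Q) + (n : ℝ)⁻¹ • onesMat n)
    (γc γ θ ε₁ ε₂ : ℝ) (hγc : 0 < γc) (hγ : 0 < γ) (hθ0 : 0 < θ) (hθ1 : θ < 1)
    (hε₁ : 0 < ε₁) (hε₂ : 0 < ε₂)
    (dtil r upm upp : Fin n → ℝ)
    (ubarp : Fin n → ℝ)
    (hubarp : ubarp = -(Qinv *ᵥ
      (((onesVec n ⬝ᵥ (Qinv *ᵥ onesVec n))⁻¹ • onesMat n) *ᵥ dtil + r)))
    (δp : ℝ)
    (hδp : δp = min (⨅ i, (upp - ubarp) i) (⨅ j, (ubarp - upm) j))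
    (δθ : ℝ)
    (hδθ : δθ = euclNorm ((Φ⁻¹ * (Qbar * Qbar * Q)) *ᵥ dtil) /
      matOpNorm (Φ⁻¹ * Qbar) * (θ / (1 - θ)))
    (hγc_bound : γc < (onesVec n ⬝ᵥ (Qinv *ᵥ onesVec n)) * ε₁ /
      (euclNorm ((onesMat n * Qinv * Qbar * Q) *ᵥ dtil) +
        matOpNorm (onesMat n * Qinv) * ε₂))
    (hγ_bound : euclNorm ((Φ⁻¹ * (Qbar * Qbar * Q)) *ᵥ dtil) * γ <
      (1 - θ) * min δp ε₂)
    (hγ_boundθ : matOpNorm (Φ⁻¹ * Qbar) ≠ 0 →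
      euclNorm ((Φ⁻¹ * (Qbar * Qbar * Q)) *ᵥ dtil) * γ < (1 - θ) * δθ)
    (uhatp xhat : Fin n → ℝ)
    (huhatp : uhatp = γ • (((γ • Qbar + Φ)⁻¹ * (Qbar * Qbar * Q)) *ᵥ dtil))
    (hxhat : xhat = γc • ((onesVec n ⬝ᵥ (Qinv *ᵥ onesVec n))⁻¹ •
      ((onesMat n * Qinv) *ᵥ
        ((1 - γ • ((γ • Qbar + Φ)⁻¹ * Qbar)) *ᵥ ((Qbar * Q) *ᵥ dtil))))) :
    euclNorm uhatp <
      min (min (⨅ i, (upp - ubarp) i) (⨅ j, (ubarp - upm) j)) ε₂ ∧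
    euclNorm xhat < ε₁ := by
  -- invertibility
  have hΦu : IsUnit Φ := phi_isUnit hn q hq Lc hsymm hLc1 hker Q Φ hQ hΦ
  have hMu : IsUnit (γ • Qbar + Φ) :=
    gamma_isUnit hn q hq Lc hsymm hoff hLc1 Q Qinv Qbar Φ hQ hQinv hQbar hΦ γ hγ
  have hΦd : IsUnit Φ.det := (Matrix.isUnit_iff_isUnit_det Φ).mp hΦu
  have hMd : IsUnit (γ • Qbar + Φ).det := (Matrix.isUnit_iff_isUnit_det _).mp hMu
  -- abbreviations
  set s' : ℝ := onesVec n ⬝ᵥ (Qinv *ᵥ onesVec n) with hs'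
  have hspos : 0 < s' := by
    rw [hs', s_eq q Qinv hQinv]
    exact Finset.sum_pos (fun i _ => inv_pos.mpr (hq i))
      (Finset.univ_nonempty_iff.mpr (Fin.pos_iff_nonempty.mp (by omega)))
  set M : Matrix (Fin n) (Fin n) ℝ := γ • Qbar + Φ with hM
  set B : Matrix (Fin n) (Fin n) ℝ := Qbar * Qbar * Q with hB
  set w : Fin n → ℝ := M⁻¹ *ᵥ (B *ᵥ dtil) with hw
  set A : Matrix (Fin n) (Fin n) ℝ := Φ⁻¹ * Qbar with hA
  set v : Fin n → ℝ := (Φ⁻¹ * B) *ᵥ dtil with hv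
  set nv : ℝ := euclNorm v with hnv
  set a : ℝ := matOpNorm A with ha
  set nw : ℝ := euclNorm w with hnw
  set m : ℝ := min δp ε₂ with hm
  clear_value M B w A v nv a nw m
  -- uhatp = γ • w
  have huw : uhatp = γ • w := by
    rw [huhatp, hw, Matrix.mulVec_mulVec]
  have hnu : euclNorm uhatp = γ * nw := by
    rw [huw, euclNorm_smul, abs_of_pos hγ, hnw]
  -- key identity : w + γ • (A *ᵥ w) = v
  have hMw : M *ᵥ w = B *ᵥ dtil := by
    rw [hw, Matrix.mulVec_mulVec, Matrix.mul_nonsing_inv _ hMd, Matrix.one_mulVec]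
  have hkey : w + γ • (A *ᵥ w) = v := by
    have h2 : Φ⁻¹ * M = γ • A + 1 := by
      rw [hM, hA, Matrix.mul_add, Matrix.mul_smul, Matrix.nonsing_inv_mul _ hΦd]
    calc w + γ • (A *ᵥ w) = (γ • A + 1) *ᵥ w := by
          rw [Matrix.add_mulVec, Matrix.smul_mulVec, Matrix.one_mulVec, add_comm]
      _ = (Φ⁻¹ * M) *ᵥ w := by rw [h2]
      _ = Φ⁻¹ *ᵥ (M *ᵥ w) := (Matrix.mulVec_mulVec w Φ⁻¹ M).symm
      _ = Φ⁻¹ *ᵥ (B *ᵥ dtil) := by rw [hMw]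
      _ = (Φ⁻¹ * B) *ᵥ dtil := Matrix.mulVec_mulVec dtil Φ⁻¹ B
      _ = v := hv.symm
  -- basic norm facts
  have hnv0 : 0 ≤ nv := by rw [hnv]; exact euclNorm_nonneg v
  have hnw0 : 0 ≤ nw := by rw [hnw]; exact euclNorm_nonneg w
  have ha0 : 0 ≤ a := by rw [ha]; exact matOpNorm_nonneg A
  have hm_pos : 0 < m := by nlinarith [hγ_bound, mul_nonneg hnv0 hγ.le]
  have hgnv_lt : γ * nv < m := by nlinarith [hγ_bound, hm_pos]
  have hbound : nw ≤ nv + γ * (a * nw) := by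
    have hwe : w = v - γ • (A *ᵥ w) := by
      rw [← hkey]; abel
    calc nw = euclNorm (v - γ • (A *ᵥ w)) := by rw [hnw, ← hwe]
      _ ≤ euclNorm v + euclNorm (γ • (A *ᵥ w)) := euclNorm_sub_le _ _
      _ = nv + |γ| * euclNorm (A *ᵥ w) := by rw [euclNorm_smul, hnv]
      _ ≤ nv + γ * (a * nw) := by
          rw [abs_of_pos hγ]
          have := mul_le_mul_of_nonneg_left (euclNorm_mulVec_le A w) hγ.le
          rw [← ha, ← hnw] at this
          linarith
  -- Part 1
  have part1 : euclNorm uhatp < m := by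
    rcases eq_or_ne a 0 with ha0' | ha0'
    · -- A *ᵥ w = 0, so w = v
      have hAw : A *ᵥ w = 0 := by
        apply euclNorm_eq_zero
        have h1 := euclNorm_mulVec_le A w
        have h2 := euclNorm_nonneg (A *ᵥ w)
        rw [← ha, ha0'] at h1
        linarith
      have hwv : w = v := by
        rw [← hkey, hAw, smul_zero, add_zero]
      rw [hnu, hnw, hwv, ← hnv]
      linarith [hgnv_lt]
    · have hapos : 0 < a := lt_of_le_of_ne ha0 (Ne.symm ha0')
      have hθδ := hγ_boundθ ha0'
      rw [hδθ] at hθδ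
      have h1θ : (1 : ℝ) - θ ≠ 0 := by linarith
      have hθδ' : nv * γ < nv * θ / a := by
        have he : (1 - θ) * (nv / a * (θ / (1 - θ))) = nv * θ / a := by
          rw [mul_comm ((1:ℝ) - θ) _, mul_assoc, div_mul_cancel₀ θ h1θ,
            div_mul_eq_mul_div]
        rw [he] at hθδ
        exact hθδ
      have hnvpos : 0 < nv := by
        rcases lt_or_eq_of_le hnv0 with h | h
        · exact h
        · exfalso
          rw [← h] at hθδ'
          simp at hθδ'
      have h4 := (lt_div_iff₀ hapos).mp hθδ'
      have hga : γ * a < θ := by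
        by_contra hcon
        push_neg at hcon
        have h5 := mul_le_mul_of_nonneg_left hcon hnvpos.le
        linarith [h4, h5]
      have ht := mul_le_mul_of_nonneg_left hbound hγ.le
      have h1 : γ * nw * (1 - γ * a) ≤ γ * nv := by linarith [ht]
      have h2 : γ * nw * (1 - θ) ≤ γ * nw * (1 - γ * a) := by
        have h6 := mul_le_mul_of_nonneg_left hga.le (mul_nonneg hγ.le hnw0)
        linarith [h6]
      have h3 : γ * nw * (1 - θ) < (1 - θ) * m := by
        calc γ * nw * (1 - θ) ≤ γ * nv := h2.trans h1
          _ = nv * γ := by ring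
          _ < (1 - θ) * m := hγ_bound
      rw [hnu]
      by_contra hcon
      push_neg at hcon
      have h7 := mul_le_mul_of_nonneg_left hcon (by linarith : (0:ℝ) ≤ 1 - θ)
      linarith [h3, h7]
  -- Part 2
  have hupε₂ : euclNorm uhatp < ε₂ := lt_of_lt_of_le part1 (by rw [hm]; exact min_le_right _ _)
  set N1 : ℝ := euclNorm ((onesMat n * Qinv * Qbar * Q) *ᵥ dtil) with hN1
  set N2 : ℝ := matOpNorm (onesMat n * Qinv) with hN2
  set z : Fin n → ℝ := (Qbar * Q) *ᵥ dtil with hz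
  set P : Matrix (Fin n) (Fin n) ℝ := onesMat n * Qinv with hP
  clear_value N1 N2 z P
  have hAz : (M⁻¹ * Qbar) *ᵥ z = w := by
    rw [hz, Matrix.mulVec_mulVec, hw, hB, Matrix.mulVec_mulVec, mul_assoc, mul_assoc]
  have hinner : (1 - γ • (M⁻¹ * Qbar)) *ᵥ z = z - γ • w := by
    rw [Matrix.sub_mulVec, Matrix.one_mulVec, Matrix.smul_mulVec, hAz]
  have hPz : euclNorm (P *ᵥ z) = N1 := by
    rw [hz, Matrix.mulVec_mulVec, hN1, hP]
    simp only [mul_assoc]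
  have hN10 : 0 ≤ N1 := by rw [hN1]; exact euclNorm_nonneg _
  have hN20 : 0 ≤ N2 := by rw [hN2]; exact matOpNorm_nonneg _
  have hxhat2 : xhat = γc • (s'⁻¹ • (P *ᵥ z - P *ᵥ (γ • w))) := by
    rw [hxhat, hinner, Matrix.mulVec_sub]
  have hxb : euclNorm xhat ≤ γc * (s'⁻¹ * (N1 + N2 * ε₂)) := by
    calc euclNorm xhat = |γc| * (|s'⁻¹| * euclNorm (P *ᵥ z - P *ᵥ (γ • w))) := by
          rw [hxhat2, euclNorm_smul, euclNorm_smul]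
      _ = γc * (s'⁻¹ * euclNorm (P *ᵥ z - P *ᵥ (γ • w))) := by
          rw [abs_of_pos hγc, abs_of_pos (inv_pos.mpr hspos)]
      _ ≤ γc * (s'⁻¹ * (N1 + N2 * ε₂)) := by
          have ht : euclNorm (P *ᵥ z - P *ᵥ (γ • w)) ≤ N1 + N2 * ε₂ := by
            calc euclNorm (P *ᵥ z - P *ᵥ (γ • w))
                ≤ euclNorm (P *ᵥ z) + euclNorm (P *ᵥ (γ • w)) := euclNorm_sub_le _ _
              _ ≤ N1 + N2 * ε₂ := by
                  have e1 : euclNorm (P *ᵥ z) = N1 := hPz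
                  have e2 : euclNorm (P *ᵥ (γ • w)) ≤ N2 * ε₂ := by
                    calc euclNorm (P *ᵥ (γ • w)) ≤ N2 * euclNorm (γ • w) := by
                          rw [hN2, hP]; exact euclNorm_mulVec_le _ (γ • w)
                      _ = N2 * euclNorm uhatp := by rw [huw]
                      _ ≤ N2 * ε₂ :=
                          mul_le_mul_of_nonneg_left hupε₂.le hN20
                  linarith [e1.le, e1.ge, e2]
          exact mul_le_mul_of_nonneg_left
            (mul_le_mul_of_nonneg_left ht (inv_pos.mpr hspos).le) hγc.le
  have hD : 0 < N1 + N2 * ε₂ := by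
    rcases lt_or_eq_of_le (by positivity : (0:ℝ) ≤ N1 + N2 * ε₂) with h | h
    · exact h
    · exfalso
      rw [← h, div_zero] at hγc_bound
      linarith
  have hγcD : γc * (N1 + N2 * ε₂) < s' * ε₁ := (lt_div_iff₀ hD).mp hγc_bound
  have part2 : euclNorm xhat < ε₁ := by
    have : γc * (s'⁻¹ * (N1 + N2 * ε₂)) < ε₁ := by
      rw [show γc * (s'⁻¹ * (N1 + N2 * ε₂)) = (γc * (N1 + N2 * ε₂)) / s' by
        field_simp]
      exact (div_lt_iff₀ hspos).mpr (by linarith [hγcD])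
    linarith [hxb]
  refine ⟨?_, part2⟩
  rw [← hδp, ← hm]
  exact part1
end
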